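/- arXiv:1411.4086 — 3 statements merged into one kernel-verified Lean document; each statement's English description precedes it below -/
import Mathlib

section
/- Under the binary Dawid–Skene model with the general hyperplane rule: if t̄ ≥ 0, then the mean error rate satisfies E[E_N] ≤ min{ exp(−t̄²/2), exp(−t̄²/(2·(σ² + c·t̄/3))) }; furthermore, for every ε ∈ (0,1), if t̄ ≥ sqrt(2·ln(1/ε)), then E_N ≤ ε with probability at least 1 − exp(−N·D(ε ‖ φ(t̄))). -/
open MeasureTheory ProbabilityTheory Real

noncomputable section

namespace CrowdBin

/-- Conditional law of `Z i j ∈ {0,−1,+1}` given the true label `y j = k ∈ {−1,+1}` in the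
binary Dawid–Skene model: `q i` is the assignment probability, `pp i` (resp. `pn i`) is the
accuracy on positive (resp. negative) items. -/
def condLaw {M : ℕ} (q pp pn : Fin M → ℝ) (i : Fin M) (k h : ℤ) : ℝ :=
  if h = 0 then 1 - q i
  else q i * (if h = k then (if k = 1 then pp i else pn i)
              else 1 - (if k = 1 then pp i else pn i))

/-- `t̄` for the general hyperplane rule with weights `v` and shift `a`. -/
def tbar {M : ℕ} (q pp pn v : Fin M → ℝ) (a : ℝ) : ℝ :=
  (Real.sqrt (∑ i, v i ^ 2))⁻¹ *
    min ((∑ i, q i * v i * (2 * pp i - 1)) + a) ((∑ i, q i * v i * (2 * pn i - 1)) - a)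

/-- `c = ‖v‖_∞ / ‖v‖₂`. -/
def cConst {M : ℕ} (v : Fin M → ℝ) : ℝ :=
  (sSup {x : ℝ | ∃ i : Fin M, x = |v i|}) / Real.sqrt (∑ i, v i ^ 2)

/-- `σ² = (1/‖v‖₂²)·Σ_i q_i v_i²`. -/
def sigmaSq {M : ℕ} (q v : Fin M → ℝ) : ℝ :=
  (∑ i, v i ^ 2)⁻¹ * ∑ i, q i * v i ^ 2

/-- The error rate `E_N`. -/
def errRate {Ω : Type*} {N : ℕ} (y yhat : Fin N → Ω → ℤ) (ω : Ω) : ℝ :=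
  (N : ℝ)⁻¹ * ∑ j, if yhat j ω ≠ y j ω then (1 : ℝ) else 0

/-- `φ(x) = exp(−x²/2)`. -/
def phi (x : ℝ) : ℝ := Real.exp (-x ^ 2 / 2)

/-- Kullback–Leibler divergence between Bernoulli distributions. -/
def klBer (x y : ℝ) : ℝ := x * Real.log (x / y) + (1 - x) * Real.log ((1 - x) / (1 - y))

end CrowdBin

section CBAuxSec
open Real Finset
namespace CBAux



/-- Hoeffding's lemma core inequality. -/
lemma hoeffding_core (θ : ℝ) (h0 : 0 ≤ θ) (h1 : θ ≤ 1) (u : ℝ) :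
    1 - θ + θ * exp u ≤ exp (θ * u + u ^ 2 / 8) := by
  set g : ℝ → ℝ := fun x => 1 - θ + θ * exp x with hg
  have hgpos : ∀ x, 0 < g x := by
    intro x
    have hex := exp_pos x
    show 0 < 1 - θ + θ * exp x
    rcases eq_or_lt_of_le h0 with h | h
    · rw [← h]; norm_num
    · nlinarith [mul_pos h hex]
  set f : ℝ → ℝ := fun x => θ * x + x ^ 2 / 8 - log (g x) with hf
  set f' : ℝ → ℝ := fun x => θ + x / 4 - θ * exp x / g x with hf'
  have hgd : ∀ x, HasDerivAt g (θ * exp x) x := by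
    intro x
    exact ((hasDerivAt_exp x).const_mul θ).const_add (1 - θ)
  have hfd : ∀ x, HasDerivAt f (f' x) x := by
    intro x
    have h1' : HasDerivAt (fun x : ℝ => θ * x + x ^ 2 / 8) (θ + x / 4) x := by
      have h2 := (hasDerivAt_pow 2 x).div_const 8
      have h3 := ((hasDerivAt_id x).const_mul θ).add h2
      exact h3.congr_deriv (by push_cast; ring)
    have h2' : HasDerivAt (fun x => log (g x)) (θ * exp x / g x) x :=
      (hgd x).log (ne_of_gt (hgpos x))
    exact h1'.sub h2'
  have hfd' : ∀ x, HasDerivAt f' (1 / 4 - θ * exp x * (1 - θ) / (g x) ^ 2) x := by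
    intro x
    have hq : HasDerivAt (fun x => θ * exp x / g x)
        ((θ * exp x * g x - θ * exp x * (θ * exp x)) / (g x) ^ 2) x :=
      ((hasDerivAt_exp x).const_mul θ).div (hgd x) (ne_of_gt (hgpos x))
    have hnum : (θ * exp x * g x - θ * exp x * (θ * exp x)) = θ * exp x * (1 - θ) := by
      simp only [hg]; ring
    rw [hnum] at hq
    have h1' : HasDerivAt (fun x : ℝ => θ + x / 4) (1 / 4) x := by
      simpa using ((hasDerivAt_id x).div_const 4).const_add θ
    exact h1'.sub hq
  have hf''nonneg : ∀ x, 0 ≤ 1 / 4 - θ * exp x * (1 - θ) / (g x) ^ 2 := by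
    intro x
    rw [sub_nonneg, div_le_iff₀ (pow_pos (hgpos x) 2)]
    have hgx : g x = 1 - θ + θ * exp x := rfl
    rw [hgx]
    nlinarith [sq_nonneg ((1 - θ) - θ * exp x)]
  have hf'mono : Monotone f' := by
    apply monotone_of_deriv_nonneg
    · exact fun x => (hfd' x).differentiableAt
    · intro x
      rw [(hfd' x).deriv]
      exact hf''nonneg x
  have hf'0 : f' 0 = 0 := by simp [hf', hg]
  have hf0 : f 0 = 0 := by simp [hf, hg]
  have key : ∀ x, 0 ≤ f x := by
    intro x
    rcases le_total 0 x with hx | hx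
    · have hmono : MonotoneOn f (Set.Ici 0) := by
        apply monotoneOn_of_deriv_nonneg (convex_Ici 0)
          (Continuous.continuousOn (by
            exact continuous_iff_continuousAt.2 fun x => (hfd x).continuousAt))
          (fun x _ => (hfd x).differentiableAt.differentiableWithinAt)
        intro x hx
        rw [(hfd x).deriv]
        have : (0:ℝ) ≤ x := le_of_lt (by simpa using hx)
        calc (0:ℝ) = f' 0 := hf'0.symm
          _ ≤ f' x := hf'mono this
      have := hmono (Set.self_mem_Ici) (Set.mem_Ici.2 hx) hx
      simpa [hf0] using this
    · have hmono : AntitoneOn f (Set.Iic 0) := by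
        apply antitoneOn_of_deriv_nonpos (convex_Iic 0)
          (Continuous.continuousOn (by
            exact continuous_iff_continuousAt.2 fun x => (hfd x).continuousAt))
          (fun x _ => (hfd x).differentiableAt.differentiableWithinAt)
        intro x hx
        rw [(hfd x).deriv]
        have hx0 : x ≤ 0 := le_of_lt (by simpa using hx)
        calc f' x ≤ f' 0 := hf'mono hx0
          _ = 0 := hf'0
      have := hmono (Set.mem_Iic.2 hx) (Set.self_mem_Iic) hx
      simpa [hf0] using this
  have hkey := key u
  have : log (g u) ≤ θ * u + u ^ 2 / 8 := by
    simp only [hf] at hkey; linarith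
  calc g u = exp (log (g u)) := (exp_log (hgpos u)).symm
    _ ≤ exp (θ * u + u ^ 2 / 8) := exp_le_exp.2 this



lemma hoeffding_core' : True := trivial

/-- Three-point Hoeffding bound. -/
lemma mgf3_hoeffding (q p s : ℝ) (hq0 : 0 ≤ q) (hq1 : q ≤ 1) (hp0 : 0 ≤ p) (hp1 : p ≤ 1)
    (hcore : ∀ θ : ℝ, 0 ≤ θ → θ ≤ 1 → ∀ u : ℝ, 1 - θ + θ * exp u ≤ exp (θ * u + u ^ 2 / 8)) :
    (1 - q) + q * p * exp s + q * (1 - p) * exp (-s)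
      ≤ exp (s * (q * (2 * p - 1)) + s ^ 2 / 2) := by
  set m : ℝ := q * (2 * p - 1) with hm
  set θ : ℝ := (1 + m) / 2 with hθ
  have hm1 : -1 ≤ m := by nlinarith
  have hm2 : m ≤ 1 := by nlinarith
  have hθ0 : 0 ≤ θ := by rw [hθ]; linarith
  have hθ1 : θ ≤ 1 := by rw [hθ]; linarith
  have step1 : (1 - q) + q * p * exp s + q * (1 - p) * exp (-s)
      ≤ (1 - θ) * exp (-s) + θ * exp s := by
    have hcosh : (1:ℝ) ≤ (exp s + exp (-s)) / 2 := by
      have h := Real.one_le_cosh s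
      rwa [Real.cosh_eq] at h
    have h1q : 0 ≤ 1 - q := by linarith
    have expand : (1 - θ) * exp (-s) + θ * exp s
        = (1 - q) * ((exp s + exp (-s)) / 2) + q * p * exp s + q * (1 - p) * exp (-s) := by
      rw [hθ, hm]; ring
    rw [expand]
    nlinarith [mul_le_mul_of_nonneg_left hcosh h1q]
  have step2 : (1 - θ) * exp (-s) + θ * exp s ≤ exp (s * m + s ^ 2 / 2) := by
    have := hcore θ hθ0 hθ1 (2 * s)
    have hes : exp s = exp (-s) * exp (2 * s) := by rw [← exp_add]; ring_nf
    have hrw : (1 - θ) * exp (-s) + θ * exp s = exp (-s) * (1 - θ + θ * exp (2 * s)) := by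
      rw [hes]; ring
    rw [hrw]
    calc exp (-s) * (1 - θ + θ * exp (2 * s))
        ≤ exp (-s) * exp (θ * (2 * s) + (2 * s) ^ 2 / 8) :=
          mul_le_mul_of_nonneg_left this (le_of_lt (exp_pos _))
      _ = exp (s * m + s ^ 2 / 2) := by
          rw [← exp_add]
          congr 1
          rw [hθ]
          ring
  linarith



lemma self_le_sinh {x : ℝ} (hx : 0 ≤ x) : x ≤ Real.sinh x := by
  rcases eq_or_lt_of_le hx with h | h
  · simp [← h]
  · exact le_of_lt (Real.self_lt_sinh_iff.2 h)

/-- Three-point Bernstein-style mgf bound. -/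
lemma mgf3_bernstein (q p s : ℝ) (hq0 : 0 ≤ q) (hq1 : q ≤ 1) (hp0 : 0 ≤ p) (hp1 : p ≤ 1) :
    (1 - q) + q * p * exp s + q * (1 - p) * exp (-s)
      ≤ exp (s * (q * (2 * p - 1)) + q * (exp |s| - 1 - |s|)) := by
  set C : ℝ := exp |s| - 1 - |s| with hC
  have hA : exp s - 1 - s ≤ C := by
    rcases le_total 0 s with h | h
    · rw [hC, abs_of_nonneg h]
    · rw [hC, abs_of_nonpos h]
      have h2 : -s ≤ Real.sinh (-s) := self_le_sinh (by linarith)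
      rw [Real.sinh_eq] at h2
      simp only [neg_neg] at h2
      linarith
  have hB : exp (-s) - 1 + s ≤ C := by
    rcases le_total 0 s with h | h
    · rw [hC, abs_of_nonneg h]
      have h2 : s ≤ Real.sinh s := self_le_sinh h
      rw [Real.sinh_eq] at h2
      linarith
    · rw [hC, abs_of_nonpos h]; linarith
  have expand : (1 - q) + q * p * exp s + q * (1 - p) * exp (-s)
      = 1 + s * (q * (2 * p - 1)) + (q * p * (exp s - 1 - s) + q * (1 - p) * (exp (-s) - 1 + s)) := by
    ring
  have hqp : 0 ≤ q * p := mul_nonneg hq0 hp0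
  have hqp' : 0 ≤ q * (1 - p) := mul_nonneg hq0 (by linarith)
  have hsum : q * p * (exp s - 1 - s) + q * (1 - p) * (exp (-s) - 1 + s) ≤ q * C := by
    calc q * p * (exp s - 1 - s) + q * (1 - p) * (exp (-s) - 1 + s)
        ≤ q * p * C + q * (1 - p) * C :=
          add_le_add (mul_le_mul_of_nonneg_left hA hqp) (mul_le_mul_of_nonneg_left hB hqp')
      _ = q * C := by ring
  calc (1 - q) + q * p * exp s + q * (1 - p) * exp (-s)
      ≤ 1 + (s * (q * (2 * p - 1)) + q * C) := by rw [expand]; linarith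
    _ ≤ exp (s * (q * (2 * p - 1)) + q * C) := by
        have := Real.add_one_le_exp (s * (q * (2 * p - 1)) + q * C)
        linarith

/-- `2 * 3^n ≤ (n+2)!`. -/
lemma two_mul_three_pow_le (n : ℕ) : 2 * 3 ^ n ≤ (n + 2).factorial := by
  induction n with
  | zero => simp [Nat.factorial]
  | succ k ih =>
    have : (k + 3).factorial = (k + 3) * (k + 2).factorial := rfl
    calc 2 * 3 ^ (k + 1) = 3 * (2 * 3 ^ k) := by ring
      _ ≤ 3 * (k + 2).factorial := by omega
      _ ≤ (k + 3) * (k + 2).factorial := by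
          exact Nat.mul_le_mul_right _ (by omega)
      _ = (k + 3).factorial := rfl

/-- Taylor-tail bound for exp. -/
lemma exp_tail_bound (x z : ℝ) (hx : 0 ≤ x) (hxz : x ≤ z) (hz : z < 3) :
    exp x - 1 - x ≤ x ^ 2 / 2 * (1 - z / 3)⁻¹ := by
  have hz0 : 0 ≤ z := le_trans hx hxz
  have hr0 : 0 ≤ z / 3 := by linarith
  have hr1 : z / 3 < 1 := by linarith
  have hexp : exp x = ∑' n : ℕ, x ^ n / n.factorial := by
    rw [Real.exp_eq_exp_ℝ, NormedSpace.exp_eq_tsum_div]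
  have hsumf : Summable (fun n : ℕ => x ^ n / n.factorial) := by
    have := NormedSpace.expSeries_div_summable x
    exact this
  have hshift : ∑' n : ℕ, x ^ n / n.factorial
      = (1 + x) + ∑' n : ℕ, x ^ (n + 2) / (n + 2).factorial := by
    rw [← Summable.sum_add_tsum_nat_add 2 hsumf]
    congr 1
    simp [Finset.sum_range_succ, Nat.factorial]
  have hterm : ∀ n : ℕ, x ^ (n + 2) / (n + 2).factorial ≤ x ^ 2 / 2 * (z / 3) ^ n := by
    intro n
    have hfac : (2:ℝ) * 3 ^ n ≤ ((n + 2).factorial : ℝ) := by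
      exact_mod_cast two_mul_three_pow_le n
    have hfacpos : (0:ℝ) < ((n + 2).factorial : ℝ) := by positivity
    rw [div_le_iff₀ hfacpos]
    have hxn : x ^ (n + 2) = x ^ 2 * x ^ n := by ring
    have h1 : x ^ n ≤ z ^ n := pow_le_pow_left₀ hx hxz n
    have h2 : x ^ 2 / 2 * (z / 3) ^ n * (2 * 3 ^ n) = x ^ 2 * z ^ n := by
      rw [div_pow]
      field_simp
    calc x ^ (n + 2) = x ^ 2 * x ^ n := by ring
      _ ≤ x ^ 2 * z ^ n := by
          exact mul_le_mul_of_nonneg_left h1 (sq_nonneg x)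
      _ = x ^ 2 / 2 * (z / 3) ^ n * (2 * 3 ^ n) := h2.symm
      _ ≤ x ^ 2 / 2 * (z / 3) ^ n * ((n + 2).factorial : ℝ) := by
          apply mul_le_mul_of_nonneg_left hfac
          positivity
  have hgeo : Summable (fun n : ℕ => x ^ 2 / 2 * (z / 3) ^ n) :=
    (summable_geometric_of_lt_one hr0 hr1).mul_left _
  have hsum2 : Summable (fun n : ℕ => x ^ (n + 2) / (n + 2).factorial) := by
    exact (summable_nat_add_iff 2).2 hsumf
  have htail : ∑' n : ℕ, x ^ (n + 2) / (n + 2).factorial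
      ≤ ∑' n : ℕ, x ^ 2 / 2 * (z / 3) ^ n := Summable.tsum_le_tsum hterm hsum2 hgeo
  have hgeosum : ∑' n : ℕ, x ^ 2 / 2 * (z / 3) ^ n = x ^ 2 / 2 * (1 - z / 3)⁻¹ := by
    rw [tsum_mul_left, tsum_geometric_of_lt_one hr0 hr1]
  rw [hexp, hshift]
  linarith [htail, hgeosum ▸ htail]



/-- The finite set of possible label vectors. -/
def H (M : ℕ) : Finset (Fin M → ℤ) := Fintype.piFinset (fun _ => ({0, 1, -1} : Finset ℤ))

lemma wnonneg {r a : ℝ} (hr0 : 0 ≤ r) (hr1 : r ≤ 1) (ha0 : 0 ≤ a) (ha1 : a ≤ 1)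
    (w : ℤ → ℝ) (hw0 : w 0 = 1 - r) (hw1 : w 1 = r * a) (hwm : w (-1) = r * (1 - a))
    {x : ℤ} (hx : x = 0 ∨ x = 1 ∨ x = -1) : 0 ≤ w x := by
  rcases hx with h | h | h <;> subst h <;>
    [rw [hw0]; rw [hw1]; rw [hwm]] <;> nlinarith

/-- Chernoff step: the bad-event mass is bounded by `exp(-λb) * ∏ mgf factors`. -/
lemma chernoff_step {M : ℕ} (u : Fin M → ℝ) (b : ℝ) (r α : Fin M → ℝ)
    (hr0 : ∀ i, 0 ≤ r i) (hr1 : ∀ i, r i ≤ 1) (hα0 : ∀ i, 0 ≤ α i) (hα1 : ∀ i, α i ≤ 1)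
    (w : Fin M → ℤ → ℝ) (hw0 : ∀ i, w i 0 = 1 - r i) (hw1 : ∀ i, w i 1 = r i * α i)
    (hwm : ∀ i, w i (-1) = r i * (1 - α i))
    (lam : ℝ) (hlam : 0 ≤ lam) :
    ∑ h ∈ H M, (if (∑ i, u i * (h i : ℝ)) + b ≤ 0 then ∏ i, w i (h i) else 0)
      ≤ exp (-(lam * b)) *
        ∏ i, ((1 - r i) + r i * α i * exp (-(lam * u i)) + r i * (1 - α i) * exp (lam * u i)) := by
  have hwn : ∀ (h : Fin M → ℤ), h ∈ H M → ∀ i, 0 ≤ w i (h i) := by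
    intro h hh i
    have := Fintype.mem_piFinset.1 hh i
    simp only [Finset.mem_insert, Finset.mem_singleton] at this
    exact wnonneg (hr0 i) (hr1 i) (hα0 i) (hα1 i) (w i) (hw0 i) (hw1 i) (hwm i) this
  have step1 : ∑ h ∈ H M, (if (∑ i, u i * (h i : ℝ)) + b ≤ 0 then ∏ i, w i (h i) else 0)
      ≤ ∑ h ∈ H M, exp (-(lam * ((∑ i, u i * (h i : ℝ)) + b))) * ∏ i, w i (h i) := by
    apply Finset.sum_le_sum
    intro h hh
    have hprod : 0 ≤ ∏ i, w i (h i) := Finset.prod_nonneg (fun i _ => hwn h hh i)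
    by_cases hc : (∑ i, u i * (h i : ℝ)) + b ≤ 0
    · rw [if_pos hc]
      have : (1:ℝ) ≤ exp (-(lam * ((∑ i, u i * (h i : ℝ)) + b))) := by
        rw [← Real.exp_zero]
        apply exp_le_exp.2
        nlinarith
      nlinarith
    · rw [if_neg hc]
      positivity
  have step2 : ∀ (h : Fin M → ℤ),
      exp (-(lam * ((∑ i, u i * (h i : ℝ)) + b))) * ∏ i, w i (h i)
        = exp (-(lam * b)) * ∏ i, (w i (h i) * exp (-(lam * (u i * (h i : ℝ))))) := by
    intro h
    have e1 : -(lam * ((∑ i, u i * (h i : ℝ)) + b))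
        = (∑ i, -(lam * (u i * (h i : ℝ)))) + -(lam * b) := by
      rw [Finset.sum_neg_distrib, ← Finset.mul_sum]; ring
    rw [e1, Real.exp_add, Real.exp_sum, Finset.prod_mul_distrib]
    ring
  have step3 : ∑ h ∈ H M, exp (-(lam * b)) * ∏ i, (w i (h i) * exp (-(lam * (u i * (h i : ℝ)))))
      = exp (-(lam * b)) * ∑ h ∈ H M, ∏ i, (w i (h i) * exp (-(lam * (u i * (h i : ℝ))))) := by
    rw [Finset.mul_sum]
  have step4 : ∑ h ∈ H M, ∏ i, (w i (h i) * exp (-(lam * (u i * (h i : ℝ)))))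
      = ∏ i, ∑ x ∈ ({0, 1, -1} : Finset ℤ), (w i x * exp (-(lam * (u i * (x : ℝ))))) := by
    rw [Finset.prod_univ_sum]
    rfl
  have step5 : ∀ i, ∑ x ∈ ({0, 1, -1} : Finset ℤ), (w i x * exp (-(lam * (u i * (x : ℝ)))))
      = (1 - r i) + r i * α i * exp (-(lam * u i)) + r i * (1 - α i) * exp (lam * u i) := by
    intro i
    rw [show ({0, 1, -1} : Finset ℤ) = {0, 1, -1} from rfl]
    rw [Finset.sum_insert (by decide), Finset.sum_insert (by decide), Finset.sum_singleton]
    rw [hw0 i, hw1 i, hwm i]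
    push_cast
    simp only [mul_zero, mul_one, mul_neg, neg_zero, neg_neg, Real.exp_zero]
    ring
  calc ∑ h ∈ H M, (if (∑ i, u i * (h i : ℝ)) + b ≤ 0 then ∏ i, w i (h i) else 0)
      ≤ ∑ h ∈ H M, exp (-(lam * ((∑ i, u i * (h i : ℝ)) + b))) * ∏ i, w i (h i) := step1
    _ = ∑ h ∈ H M, exp (-(lam * b)) * ∏ i, (w i (h i) * exp (-(lam * (u i * (h i : ℝ))))) := by
        exact Finset.sum_congr rfl (fun h _ => step2 h)
    _ = exp (-(lam * b)) * ∑ h ∈ H M, ∏ i, (w i (h i) * exp (-(lam * (u i * (h i : ℝ))))) := step3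
    _ = exp (-(lam * b)) * ∏ i, ∑ x ∈ ({0, 1, -1} : Finset ℤ), (w i x * exp (-(lam * (u i * (x : ℝ))))) := by
        rw [step4]
    _ = _ := by
        congr 1
        exact Finset.prod_congr rfl (fun i _ => step5 i)





theorem chernoff_step'' {M : ℕ} (u : Fin M → ℝ) (b : ℝ) (r α : Fin M → ℝ)
    (hr0 : ∀ i, 0 ≤ r i) (hr1 : ∀ i, r i ≤ 1) (hα0 : ∀ i, 0 ≤ α i) (hα1 : ∀ i, α i ≤ 1)
    (w : Fin M → ℤ → ℝ)
    (hcs : ∀ lam : ℝ, 0 ≤ lam →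
      ∑ h ∈ H M, (if (∑ i, u i * (h i : ℝ)) + b ≤ 0 then ∏ i, w i (h i) else 0)
        ≤ exp (-(lam * b)) *
          ∏ i, ((1 - r i) + r i * α i * exp (-(lam * u i)) + r i * (1 - α i) * exp (lam * u i)))
    (lam : ℝ) (hlam : 0 ≤ lam) (B : Fin M → ℝ)
    (hfac : ∀ i, (1 - r i) + r i * α i * exp (-(lam * u i)) + r i * (1 - α i) * exp (lam * u i)
        ≤ exp (B i)) :
    ∑ h ∈ H M, (if (∑ i, u i * (h i : ℝ)) + b ≤ 0 then ∏ i, w i (h i) else 0)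
      ≤ exp (-(lam * b) + ∑ i, B i) := by
  calc ∑ h ∈ H M, (if (∑ i, u i * (h i : ℝ)) + b ≤ 0 then ∏ i, w i (h i) else 0)
      ≤ exp (-(lam * b)) *
          ∏ i, ((1 - r i) + r i * α i * exp (-(lam * u i)) + r i * (1 - α i) * exp (lam * u i)) :=
        hcs lam hlam
    _ ≤ exp (-(lam * b)) * ∏ i, exp (B i) := by
        apply mul_le_mul_of_nonneg_left _ (le_of_lt (exp_pos _))
        apply Finset.prod_le_prod
        · intro i _
          have h1 : 0 ≤ 1 - r i := by linarith [hr1 i]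
          have h2 : 0 ≤ r i * α i * exp (-(lam * u i)) := by
            have := hr0 i; have := hα0 i; positivity
          have h3 : 0 ≤ r i * (1 - α i) * exp (lam * u i) := by
            have := hr0 i; have h4 : 0 ≤ 1 - α i := by linarith [hα1 i]
            positivity
          linarith
        · exact fun i _ => hfac i
    _ = exp (-(lam * b) + ∑ i, B i) := by rw [← Real.exp_sum, ← Real.exp_add]




theorem side_hoeffding {M : ℕ} (u : Fin M → ℝ) (b : ℝ) (r α : Fin M → ℝ)
    (hr0 : ∀ i, 0 ≤ r i) (hr1 : ∀ i, r i ≤ 1) (hα0 : ∀ i, 0 ≤ α i) (hα1 : ∀ i, α i ≤ 1)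
    (w : Fin M → ℤ → ℝ)
    (hcs : ∀ lam : ℝ, 0 ≤ lam →
      ∑ h ∈ H M, (if (∑ i, u i * (h i : ℝ)) + b ≤ 0 then ∏ i, w i (h i) else 0)
        ≤ exp (-(lam * b)) *
          ∏ i, ((1 - r i) + r i * α i * exp (-(lam * u i)) + r i * (1 - α i) * exp (lam * u i)))
    (t nv : ℝ) (hnv0 : 0 < nv) (hnvsq : nv ^ 2 = ∑ i, u i ^ 2)
    (ht0 : 0 ≤ t) (hT : t * nv ≤ (∑ i, u i * (r i * (2 * α i - 1))) + b) :
    ∑ h ∈ H M, (if (∑ i, u i * (h i : ℝ)) + b ≤ 0 then ∏ i, w i (h i) else 0)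
      ≤ exp (-t ^ 2 / 2) := by
  set lam : ℝ := t / nv with hlamdef
  have hlam0 : 0 ≤ lam := div_nonneg ht0 hnv0.le
  set B : Fin M → ℝ := fun i =>
    (-(lam * u i)) * (r i * (2 * α i - 1)) + (-(lam * u i)) ^ 2 / 2 with hBdef
  have hfac : ∀ i, (1 - r i) + r i * α i * exp (-(lam * u i)) + r i * (1 - α i) * exp (lam * u i)
      ≤ exp (B i) := by
    intro i
    have h := mgf3_hoeffding (r i) (α i) (-(lam * u i)) (hr0 i) (hr1 i) (hα0 i) (hα1 i)
      (fun θ h0 h1 v => hoeffding_core θ h0 h1 v)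
    rw [neg_neg] at h
    exact h
  have hmain := chernoff_step'' u b r α hr0 hr1 hα0 hα1 w hcs lam hlam0 B hfac
  refine le_trans hmain (exp_le_exp.2 ?_)
  have hsB : ∑ i, B i = -(lam * ∑ i, u i * (r i * (2 * α i - 1))) + lam ^ 2 * nv ^ 2 / 2 := by
    have hBi : ∀ i, B i = -(lam * (u i * (r i * (2 * α i - 1)))) + lam ^ 2 * u i ^ 2 / 2 :=
      fun i => by rw [hBdef]; ring
    rw [Finset.sum_congr rfl (fun i _ => hBi i), Finset.sum_add_distrib,
      Finset.sum_neg_distrib, ← Finset.mul_sum, ← Finset.sum_div, ← Finset.mul_sum, ← hnvsq]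
  have hnvne : nv ≠ 0 := hnv0.ne'
  have e1 : lam * (t * nv) = t ^ 2 := by rw [hlamdef]; field_simp
  have e2 : lam ^ 2 * nv ^ 2 = t ^ 2 := by rw [hlamdef]; field_simp
  have e3 : lam * (t * nv) ≤ lam * ((∑ i, u i * (r i * (2 * α i - 1))) + b) :=
    mul_le_mul_of_nonneg_left hT hlam0
  rw [hsB]
  nlinarith [e1, e2, e3]

theorem side_bernstein {M : ℕ} (u : Fin M → ℝ) (b : ℝ) (r α : Fin M → ℝ)
    (hr0 : ∀ i, 0 ≤ r i) (hr1 : ∀ i, r i ≤ 1) (hα0 : ∀ i, 0 ≤ α i) (hα1 : ∀ i, α i ≤ 1)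
    (w : Fin M → ℤ → ℝ)
    (hcs : ∀ lam : ℝ, 0 ≤ lam →
      ∑ h ∈ H M, (if (∑ i, u i * (h i : ℝ)) + b ≤ 0 then ∏ i, w i (h i) else 0)
        ≤ exp (-(lam * b)) *
          ∏ i, ((1 - r i) + r i * α i * exp (-(lam * u i)) + r i * (1 - α i) * exp (lam * u i)))
    (t nv binf V : ℝ) (hnv0 : 0 < nv) (hnvsq : nv ^ 2 = ∑ i, u i ^ 2)
    (hbinf : ∀ i, |u i| ≤ binf) (hbinf0 : 0 ≤ binf)
    (hV : V * nv ^ 2 = ∑ i, r i * u i ^ 2) (hV0 : 0 < V)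
    (ht0 : 0 ≤ t) (hT : t * nv ≤ (∑ i, u i * (r i * (2 * α i - 1))) + b) :
    ∑ h ∈ H M, (if (∑ i, u i * (h i : ℝ)) + b ≤ 0 then ∏ i, w i (h i) else 0)
      ≤ exp (-t ^ 2 / (2 * (V + (binf / nv) * t / 3))) := by
  have hnvne : nv ≠ 0 := hnv0.ne'
  set cc : ℝ := binf / nv with hccdef
  have hcc0 : 0 ≤ cc := div_nonneg hbinf0 hnv0.le
  set D : ℝ := V + cc * t / 3 with hDdef
  have hD0 : 0 < D := by
    have : 0 ≤ cc * t / 3 := by positivity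
    rw [hDdef]; linarith
  set lam : ℝ := t / (nv * D) with hlamdef
  have hlam0 : 0 ≤ lam := div_nonneg ht0 (by positivity)
  set z : ℝ := lam * binf with hzdef
  have hz0 : 0 ≤ z := mul_nonneg hlam0 hbinf0
  have hzD : z = cc * t / D := by
    rw [hzdef, hlamdef, hccdef]
    field_simp
  have hDexp : 3 * D = 3 * V + cc * t := by rw [hDdef]; ring
  have hz3 : z < 3 := by
    rw [hzD, div_lt_iff₀ hD0]
    linarith [hV0, hDexp]
  have hinv : (1 - z / 3)⁻¹ = D / V := by
    have : 1 - z / 3 = V / D := by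
      rw [hzD]; field_simp; rw [hDdef]; ring
    rw [this, inv_div]
  have hinvpos : 0 ≤ (1 - z / 3)⁻¹ := by
    rw [hinv]; positivity
  set B : Fin M → ℝ := fun i =>
    (-(lam * u i)) * (r i * (2 * α i - 1)) + r i * (lam ^ 2 * u i ^ 2 / 2 * (1 - z / 3)⁻¹)
    with hBdef
  have hfac : ∀ i, (1 - r i) + r i * α i * exp (-(lam * u i)) + r i * (1 - α i) * exp (lam * u i)
      ≤ exp (B i) := by
    intro i
    have h := mgf3_bernstein (r i) (α i) (-(lam * u i)) (hr0 i) (hr1 i) (hα0 i) (hα1 i)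
    rw [neg_neg] at h
    refine le_trans h (exp_le_exp.2 ?_)
    have habs : |(-(lam * u i))| = lam * |u i| := by
      rw [abs_neg, abs_mul, abs_of_nonneg hlam0]
    have hx0 : 0 ≤ lam * |u i| := by positivity
    have hxz : lam * |u i| ≤ z := by
      rw [hzdef]
      exact mul_le_mul_of_nonneg_left (hbinf i) hlam0
    have htail := exp_tail_bound (lam * |u i|) z hx0 hxz hz3
    have hsq : (lam * |u i|) ^ 2 = lam ^ 2 * u i ^ 2 := by
      rw [mul_pow, sq_abs]
    have h2 : exp |(-(lam * u i))| - 1 - |(-(lam * u i))|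
        ≤ lam ^ 2 * u i ^ 2 / 2 * (1 - z / 3)⁻¹ := by
      rw [habs]
      calc exp (lam * |u i|) - 1 - (lam * |u i|)
          ≤ (lam * |u i|) ^ 2 / 2 * (1 - z / 3)⁻¹ := htail
        _ = lam ^ 2 * u i ^ 2 / 2 * (1 - z / 3)⁻¹ := by rw [hsq]
    have h3 := mul_le_mul_of_nonneg_left h2 (hr0 i)
    rw [hBdef]
    simp only []
    linarith
  have hmain := chernoff_step'' u b r α hr0 hr1 hα0 hα1 w hcs lam hlam0 B hfac
  refine le_trans hmain (exp_le_exp.2 ?_)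
  have hsB : ∑ i, B i = -(lam * ∑ i, u i * (r i * (2 * α i - 1)))
      + lam ^ 2 * (V * nv ^ 2) / 2 * (1 - z / 3)⁻¹ := by
    have hBi : ∀ i, B i = -(lam * (u i * (r i * (2 * α i - 1))))
        + lam ^ 2 * (r i * u i ^ 2) / 2 * (1 - z / 3)⁻¹ :=
      fun i => by rw [hBdef]; ring
    rw [Finset.sum_congr rfl (fun i _ => hBi i), Finset.sum_add_distrib,
      Finset.sum_neg_distrib, ← Finset.mul_sum]
    congr 1
    calc ∑ x, lam ^ 2 * (r x * u x ^ 2) / 2 * (1 - z / 3)⁻¹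
        = ∑ x, (r x * u x ^ 2) * (lam ^ 2 / 2 * (1 - z / 3)⁻¹) :=
          Finset.sum_congr rfl (fun x _ => by ring)
      _ = (∑ x, r x * u x ^ 2) * (lam ^ 2 / 2 * (1 - z / 3)⁻¹) :=
          (Finset.sum_mul _ _ _).symm
      _ = lam ^ 2 * (V * nv ^ 2) / 2 * (1 - z / 3)⁻¹ := by rw [← hV]; ring
  have e3 : lam * (t * nv) ≤ lam * ((∑ i, u i * (r i * (2 * α i - 1))) + b) :=
    mul_le_mul_of_nonneg_left hT hlam0
  have e1 : lam * (t * nv) = t ^ 2 / D := by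
    rw [hlamdef]; field_simp
  have e2 : lam ^ 2 * (V * nv ^ 2) / 2 * (1 - z / 3)⁻¹ = t ^ 2 / (2 * D) := by
    rw [hinv, hlamdef]
    field_simp
  have efin : -t ^ 2 / D + t ^ 2 / (2 * D) = -t ^ 2 / (2 * D) := by
    field_simp
    ring
  rw [hsB]
  have : -(lam * ((∑ i, u i * (r i * (2 * α i - 1))) + b)) ≤ -(t ^ 2 / D) := by
    rw [← e1]; linarith
  calc -(lam * b) + (-(lam * ∑ i, u i * (r i * (2 * α i - 1)))
        + lam ^ 2 * (V * nv ^ 2) / 2 * (1 - z / 3)⁻¹)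
      = -(lam * ((∑ i, u i * (r i * (2 * α i - 1))) + b)) + t ^ 2 / (2 * D) := by
        rw [e2]; ring
    _ ≤ -(t ^ 2 / D) + t ^ 2 / (2 * D) := by linarith
    _ = -t ^ 2 / (2 * D) := by rw [← efin]; ring




lemma mem_H {M : ℕ} {h : Fin M → ℤ} : h ∈ H M ↔ ∀ i, h i = 0 ∨ h i = 1 ∨ h i = -1 := by
  rw [H, Fintype.mem_piFinset]
  apply forall_congr'
  intro i
  simp [Finset.mem_insert]

/-- Decomposition of the measure of an event determined by `y₀` and a predicate on the votes. -/
lemma measure_event_eq {Ω : Type*} [MeasurableSpace Ω] (μ : Measure Ω) [IsProbabilityMeasure μ]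
    {M : ℕ} (y₀ : Ω → ℤ) (Z₀ : Fin M → Ω → ℤ) (hym : Measurable y₀)
    (hZm : ∀ i, Measurable (Z₀ i))
    (hZval : ∀ i ω, Z₀ i ω = 0 ∨ Z₀ i ω = 1 ∨ Z₀ i ω = -1)
    (k : ℤ) (c₀ : ℝ) (w : Fin M → ℤ → ℝ)
    (hlaw : ∀ h : Fin M → ℤ, (∀ i, h i = 0 ∨ h i = 1 ∨ h i = -1) →
      (μ {ω | y₀ ω = k ∧ ∀ i, Z₀ i ω = h i}).toReal = c₀ * ∏ i, w i (h i))
    (P : (Fin M → ℤ) → Prop) [DecidablePred P] :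
    (μ {ω | y₀ ω = k ∧ P (fun i => Z₀ i ω)}).toReal
      = ∑ h ∈ H M, (if P h then c₀ * ∏ i, w i (h i) else 0) := by
  classical
  set C : (Fin M → ℤ) → Set Ω := fun h => {ω | y₀ ω = k ∧ ∀ i, Z₀ i ω = h i} with hC
  have hCmeas : ∀ h, MeasurableSet (C h) := by
    intro h
    apply MeasurableSet.inter
    · exact hym (measurableSet_singleton k)
    · show MeasurableSet {ω | ∀ i, Z₀ i ω = h i}
      rw [Set.setOf_forall]
      exact MeasurableSet.iInter (fun i => hZm i (measurableSet_singleton (h i)))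
  have hset : {ω | y₀ ω = k ∧ P (fun i => Z₀ i ω)} = ⋃ h ∈ (H M).filter P, C h := by
    ext ω
    simp only [Set.mem_setOf_eq, Set.mem_iUnion, Finset.mem_filter, exists_prop]
    constructor
    · rintro ⟨hy, hP⟩
      exact ⟨fun i => Z₀ i ω, ⟨mem_H.2 (fun i => hZval i ω), hP⟩, hy, fun i => rfl⟩
    · rintro ⟨h, ⟨_, hP⟩, hy, hZ⟩
      have : (fun i => Z₀ i ω) = h := funext hZ
      exact ⟨hy, this ▸ hP⟩
  have hdisj : Set.PairwiseDisjoint ((H M).filter P : Set (Fin M → ℤ)) C := by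
    intro h1 _ h2 _ hne
    apply Set.disjoint_left.2
    rintro ω ⟨_, hZ1⟩ ⟨_, hZ2⟩
    exact hne (funext fun i => (hZ1 i).symm.trans (hZ2 i))
  have hmeas : μ {ω | y₀ ω = k ∧ P (fun i => Z₀ i ω)} = ∑ h ∈ (H M).filter P, μ (C h) := by
    rw [hset]
    exact measure_biUnion_finset hdisj (fun h _ => hCmeas h)
  rw [hmeas, ENNReal.toReal_sum (fun h _ => measure_ne_top μ _)]
  rw [Finset.sum_filter]
  apply Finset.sum_congr rfl
  intro h hh
  by_cases hP : P h
  · rw [if_pos hP, if_pos hP, hlaw h (mem_H.1 hh)]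
  · rw [if_neg hP, if_neg hP]



open scoped Classical in
theorem binom_tail {Ω : Type*} [MeasurableSpace Ω] (μ : Measure Ω) [IsProbabilityMeasure μ]
    {N : ℕ} (A : Fin N → Set Ω) (hAmeas : ∀ j, MeasurableSet (A j))
    (hind : ∀ f : Fin N → Set Ω, (∀ j, f j = A j ∨ f j = (A j)ᶜ) →
      μ (⋂ j, f j) = ∏ j, μ (f j))
    (pbar ε : ℝ) (hp : ∀ j, (μ (A j)).toReal ≤ pbar) (hpbar0 : 0 < pbar) (hpbar1 : pbar < 1)
    (hε0 : 0 < ε) (hε1 : ε < 1) (hpε : pbar ≤ ε) :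
    (μ {ω | ε * N < ∑ j, (A j).indicator (fun _ => (1:ℝ)) ω}).toReal
      ≤ exp (-(N:ℝ) * (ε * log (ε / pbar) + (1 - ε) * log ((1 - ε) / (1 - pbar)))) := by
  classical
  have hset_eq : {ω | ε * N < ∑ j, (A j).indicator (fun _ => (1:ℝ)) ω}
      = {ω | ε * N < ∑ j, (if ω ∈ A j then (1:ℝ) else 0)} := by
    ext ω
    simp only [Set.mem_setOf_eq, Set.indicator_apply]
  rw [hset_eq]
  set p : Fin N → ℝ := fun j => (μ (A j)).toReal with hpdef
  have hp0 : ∀ j, 0 ≤ p j := fun j => ENNReal.toReal_nonneg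
  have hp1 : ∀ j, p j ≤ 1 := fun j => by
    have := prob_le_one (μ := μ) (s := A j)
    exact ENNReal.toReal_le_of_le_ofReal zero_le_one (by simpa using this)
  -- the elementary events
  set E : Finset (Fin N) → Set Ω := fun T => ⋂ j, (if j ∈ T then A j else (A j)ᶜ) with hEdef
  have hEmeas : ∀ T, MeasurableSet (E T) := by
    intro T
    apply MeasurableSet.iInter
    intro j
    by_cases h : j ∈ T
    · simpa [h] using hAmeas j
    · simpa [h] using (hAmeas j).compl
  have hET : ∀ T : Finset (Fin N),
      (μ (E T)).toReal = (∏ j ∈ T, p j) * ∏ j ∈ Finset.univ \ T, (1 - p j) := by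
    intro T
    have h1 : μ (E T) = ∏ j, μ (if j ∈ T then A j else (A j)ᶜ) := by
      apply hind
      intro j
      by_cases h : j ∈ T
      · left; rw [if_pos h]
      · right; rw [if_neg h]
    have h2 : ∀ j, (μ (if j ∈ T then A j else (A j)ᶜ)).toReal
        = if j ∈ T then p j else 1 - p j := by
      intro j
      by_cases h : j ∈ T
      · rw [if_pos h, if_pos h]
      · rw [if_neg h, if_neg h, prob_compl_eq_one_sub (hAmeas j),
          ENNReal.toReal_sub_of_le (prob_le_one) (ENNReal.one_ne_top), ENNReal.toReal_one]
    have h3 : (μ (E T)).toReal = ∏ j, (if j ∈ T then p j else 1 - p j) := by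
      rw [h1, ENNReal.toReal_prod]
      exact Finset.prod_congr rfl (fun j _ => h2 j)
    rw [h3]
    calc ∏ j, (if j ∈ T then p j else 1 - p j)
        = ∏ j ∈ T ∪ Finset.univ \ T, (if j ∈ T then p j else 1 - p j) := by
          rw [Finset.union_sdiff_of_subset (Finset.subset_univ T)]
      _ = (∏ j ∈ T, (if j ∈ T then p j else 1 - p j)) *
            ∏ j ∈ Finset.univ \ T, (if j ∈ T then p j else 1 - p j) :=
          Finset.prod_union Finset.disjoint_sdiff
      _ = (∏ j ∈ T, p j) * ∏ j ∈ Finset.univ \ T, (1 - p j) := by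
          congr 1
          · exact Finset.prod_congr rfl (fun j hj => if_pos hj)
          · exact Finset.prod_congr rfl (fun j hj => if_neg (Finset.mem_sdiff.1 hj).2)
  -- inclusion into union of bad elementary events
  set bad : Finset (Finset (Fin N)) :=
    Finset.univ.powerset.filter (fun T => ε * N < (T.card : ℝ)) with hbaddef
  have hincl : {ω | ε * N < ∑ j, (if ω ∈ A j then (1:ℝ) else 0)} ⊆ ⋃ T ∈ bad, E T := by
    intro ω hω
    simp only [Set.mem_setOf_eq] at hω
    set T : Finset (Fin N) := Finset.univ.filter (fun j => ω ∈ A j) with hTdef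
    have hcard : ∑ j, (if ω ∈ A j then (1:ℝ) else 0) = (T.card : ℝ) := by
      rw [hTdef]
      rw [Finset.sum_boole]
    have hTbad : T ∈ bad := by
      rw [hbaddef, Finset.mem_filter]
      exact ⟨Finset.mem_powerset.2 (Finset.subset_univ T), by rw [← hcard]; exact hω⟩
    have hωE : ω ∈ E T := by
      rw [hEdef]
      apply Set.mem_iInter.2
      intro j
      by_cases h : j ∈ T
      · rw [if_pos h]
        exact (Finset.mem_filter.1 h).2
      · rw [if_neg h]
        intro hc
        exact h (Finset.mem_filter.2 ⟨Finset.mem_univ j, hc⟩)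
    exact Set.mem_biUnion hTbad hωE
  have hsum_ne_top : (∑ T ∈ bad, μ (E T)) ≠ ⊤ :=
    (ENNReal.sum_lt_top.2 (fun T _ => measure_lt_top μ _)).ne
  have hstep1 : (μ {ω | ε * N < ∑ j, (if ω ∈ A j then (1:ℝ) else 0)}).toReal
      ≤ ∑ T ∈ bad, (μ (E T)).toReal := by
    have hm := measure_mono (μ := μ) hincl
    have hub := measure_biUnion_finset_le (μ := μ) bad E
    calc (μ {ω | ε * N < ∑ j, (if ω ∈ A j then (1:ℝ) else 0)}).toReal
        ≤ (∑ T ∈ bad, μ (E T)).toReal :=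
          ENNReal.toReal_mono hsum_ne_top (le_trans hm hub)
      _ = ∑ T ∈ bad, (μ (E T)).toReal := ENNReal.toReal_sum (fun T _ => measure_ne_top μ _)
  rw [Finset.sum_congr rfl (fun T _ => hET T)] at hstep1
  -- Chernoff over subsets
  set lam : ℝ := log (ε * (1 - pbar) / (pbar * (1 - ε))) with hlamdef
  have hargpos : 0 < ε * (1 - pbar) / (pbar * (1 - ε)) := by
    apply div_pos <;> nlinarith
  have helam : exp lam = ε * (1 - pbar) / (pbar * (1 - ε)) := exp_log hargpos
  have hlam0 : 0 ≤ lam := by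
    apply Real.log_nonneg
    rw [one_le_div (by nlinarith)]
    nlinarith
  have hexplam1 : 1 ≤ exp lam := by
    rw [← Real.exp_zero]; exact exp_le_exp.2 hlam0
  have hterm_nonneg : ∀ T : Finset (Fin N),
      0 ≤ (∏ j ∈ T, p j) * ∏ j ∈ Finset.univ \ T, (1 - p j) := by
    intro T
    apply mul_nonneg
    · exact Finset.prod_nonneg (fun j _ => hp0 j)
    · exact Finset.prod_nonneg (fun j _ => by linarith [hp1 j])
  have hstep2 : ∑ T ∈ bad, (∏ j ∈ T, p j) * ∏ j ∈ Finset.univ \ T, (1 - p j)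
      ≤ ∑ T ∈ Finset.univ.powerset,
          exp (lam * ((T.card : ℝ) - ε * N)) *
            ((∏ j ∈ T, p j) * ∏ j ∈ Finset.univ \ T, (1 - p j)) := by
    calc ∑ T ∈ bad, (∏ j ∈ T, p j) * ∏ j ∈ Finset.univ \ T, (1 - p j)
        ≤ ∑ T ∈ bad, exp (lam * ((T.card : ℝ) - ε * N)) *
            ((∏ j ∈ T, p j) * ∏ j ∈ Finset.univ \ T, (1 - p j)) := by
          apply Finset.sum_le_sum
          intro T hT
          have hc : ε * N < (T.card : ℝ) := (Finset.mem_filter.1 hT).2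
          have h1 : (1:ℝ) ≤ exp (lam * ((T.card : ℝ) - ε * N)) := by
            rw [← Real.exp_zero]
            apply exp_le_exp.2
            nlinarith
          nlinarith [hterm_nonneg T]
      _ ≤ _ := by
          apply Finset.sum_le_sum_of_subset_of_nonneg
          · rw [hbaddef]; exact Finset.filter_subset _ _
          · intro T _ _
            have := hterm_nonneg T
            positivity
  have hstep3 : ∑ T ∈ Finset.univ.powerset,
        exp (lam * ((T.card : ℝ) - ε * N)) *
          ((∏ j ∈ T, p j) * ∏ j ∈ Finset.univ \ T, (1 - p j))
      = exp (-(lam * ε * N)) * ∏ j, (p j * exp lam + (1 - p j)) := by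
    rw [Finset.prod_add]
    rw [Finset.mul_sum]
    apply Finset.sum_congr rfl
    intro T _
    have hc : ∏ j ∈ T, (p j * exp lam) = (∏ j ∈ T, p j) * exp lam ^ T.card := by
      rw [Finset.prod_mul_distrib, Finset.prod_const]
    rw [hc]
    have he : exp lam ^ T.card = exp (lam * T.card) := by
      rw [mul_comm, Real.exp_nat_mul]
    rw [he]
    rw [show lam * ((T.card : ℝ) - ε * N) = -(lam * ε * N) + lam * (T.card : ℝ) from by ring,
      Real.exp_add]
    ring
  have hfactor : ∀ j, p j * exp lam + (1 - p j) ≤ pbar * exp lam + (1 - pbar) := by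
    intro j
    have h := hp j
    nlinarith [hexplam1]
  have hfac_nonneg : ∀ j, 0 ≤ p j * exp lam + (1 - p j) := by
    intro j
    have := exp_pos lam
    nlinarith [hp0 j, hp1 j]
  have hstep4 : ∏ j, (p j * exp lam + (1 - p j)) ≤ (pbar * exp lam + (1 - pbar)) ^ N := by
    calc ∏ j : Fin N, (p j * exp lam + (1 - p j))
        ≤ ∏ j : Fin N, (pbar * exp lam + (1 - pbar)) :=
          Finset.prod_le_prod (fun j _ => hfac_nonneg j) (fun j _ => hfactor j)
      _ = (pbar * exp lam + (1 - pbar)) ^ N := by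
          rw [Finset.prod_const, Finset.card_univ, Fintype.card_fin]
  -- final identification
  have hne1 : pbar ≠ 0 := ne_of_gt hpbar0
  have hne2 : (1:ℝ) - ε ≠ 0 := (by linarith : (0:ℝ) < 1 - ε).ne'
  have hkey : pbar * exp lam + (1 - pbar) = (1 - pbar) / (1 - ε) := by
    rw [helam]
    field_simp
    ring
  have hbasepos : (0:ℝ) < (1 - pbar) / (1 - ε) := by
    apply div_pos <;> linarith
  have hfinal : exp (-(lam * ε * N)) * ((1 - pbar) / (1 - ε)) ^ N
      = exp (-(N:ℝ) * (ε * log (ε / pbar) + (1 - ε) * log ((1 - ε) / (1 - pbar)))) := by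
    have hpow : ((1 - pbar) / (1 - ε)) ^ N = exp ((N:ℝ) * log ((1 - pbar) / (1 - ε))) := by
      rw [Real.exp_nat_mul, Real.exp_log hbasepos]
    rw [hpow, ← Real.exp_add]
    congr 1
    have hlamsplit : lam = log (ε / pbar) + log ((1 - pbar) / (1 - ε)) := by
      rw [hlamdef, ← Real.log_mul (by positivity) (by
        apply ne_of_gt; apply div_pos <;> linarith)]
      congr 1
      field_simp
    have hlogneg : log ((1 - pbar) / (1 - ε)) = -log ((1 - ε) / (1 - pbar)) := by
      rw [← Real.log_inv]
      congr 1
      rw [inv_div]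
    rw [hlamsplit, hlogneg]
    ring
  calc (μ {ω | ε * N < ∑ j, (if ω ∈ A j then (1:ℝ) else 0)}).toReal
      ≤ ∑ T ∈ bad, (∏ j ∈ T, p j) * ∏ j ∈ Finset.univ \ T, (1 - p j) := hstep1
    _ ≤ ∑ T ∈ Finset.univ.powerset,
          exp (lam * ((T.card : ℝ) - ε * N)) *
            ((∏ j ∈ T, p j) * ∏ j ∈ Finset.univ \ T, (1 - p j)) := hstep2
    _ = exp (-(lam * ε * N)) * ∏ j, (p j * exp lam + (1 - p j)) := hstep3
    _ ≤ exp (-(lam * ε * N)) * (pbar * exp lam + (1 - pbar)) ^ N := by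
        apply mul_le_mul_of_nonneg_left hstep4 (le_of_lt (exp_pos _))
    _ = exp (-(lam * ε * N)) * ((1 - pbar) / (1 - ε)) ^ N := by rw [hkey]
    _ = _ := hfinal


end CBAux
end CBAuxSec



/-- Under the binary Dawid–Skene model with the general hyperplane rule
`ŷ_j = sign(Σ_i v_i Z_ij + a)`: if `t̄ ≥ 0` then
`E[E_N] ≤ min{exp(−t̄²/2), exp(−t̄²/(2(σ² + c t̄/3)))}`; furthermore for every `ε ∈ (0,1)`,
if `t̄ ≥ sqrt(2 ln(1/ε))` then `E_N ≤ ε` with probability at least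
`1 − exp(−N·D(ε ‖ φ(t̄)))`. -/
theorem hyperplane_rule_error_bounds
    {Ω : Type*} [MeasurableSpace Ω] (μ : Measure Ω) [IsProbabilityMeasure μ]
    {M N : ℕ} (hM : 0 < M) (hN : 0 < N)
    (y : Fin N → Ω → ℤ) (Z : Fin M → Fin N → Ω → ℤ)
    (hym : ∀ j, Measurable (y j)) (hZm : ∀ i j, Measurable (Z i j))
    (hyval : ∀ j ω, y j ω = 1 ∨ y j ω = -1)
    (hZval : ∀ i j ω, Z i j ω = 0 ∨ Z i j ω = 1 ∨ Z i j ω = -1)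
    (pri : ℝ) (q pp pn : Fin M → ℝ)
    (hpri0 : 0 ≤ pri) (hpri1 : pri ≤ 1)
    (hq0 : ∀ i, 0 ≤ q i) (hq1 : ∀ i, q i ≤ 1)
    (hpp0 : ∀ i, 0 ≤ pp i) (hpp1 : ∀ i, pp i ≤ 1)
    (hpn0 : ∀ i, 0 ≤ pn i) (hpn1 : ∀ i, pn i ≤ 1)
    (hprior : ∀ j : Fin N, (μ {ω | y j ω = 1}).toReal = pri)
    (hlaw : ∀ (j : Fin N) (k : ℤ), (k = 1 ∨ k = -1) →
      ∀ h : Fin M → ℤ, (∀ i, h i = 0 ∨ h i = 1 ∨ h i = -1) →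
      (μ {ω | y j ω = k ∧ ∀ i, Z i j ω = h i}).toReal
        = (if k = 1 then pri else 1 - pri) * ∏ i, CrowdBin.condLaw q pp pn i k (h i))
    (hindep : iIndepFun (fun j ω => (y j ω, fun i => Z i j ω)) μ)
    (v : Fin M → ℝ) (hv : v ≠ 0) (a : ℝ)
    (yhat : Fin N → Ω → ℤ) (hyhatm : ∀ j, Measurable (yhat j))
    (hyhatval : ∀ j ω, yhat j ω = 1 ∨ yhat j ω = -1)
    (hyhatpos : ∀ j ω, 0 < (∑ i, v i * (Z i j ω : ℝ)) + a → yhat j ω = 1)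
    (hyhatneg : ∀ j ω, (∑ i, v i * (Z i j ω : ℝ)) + a < 0 → yhat j ω = -1) :
    (0 ≤ CrowdBin.tbar q pp pn v a →
      (N : ℝ)⁻¹ * ∑ j, (μ {ω | yhat j ω ≠ y j ω}).toReal
        ≤ min (Real.exp (-(CrowdBin.tbar q pp pn v a) ^ 2 / 2))
            (Real.exp (-(CrowdBin.tbar q pp pn v a) ^ 2 /
              (2 * (CrowdBin.sigmaSq q v
                + CrowdBin.cConst v * CrowdBin.tbar q pp pn v a / 3)))))
    ∧ (∀ ε : ℝ, 0 < ε → ε < 1 →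
        Real.sqrt (2 * Real.log (1 / ε)) ≤ CrowdBin.tbar q pp pn v a →
        1 - Real.exp (-(N : ℝ) *
            CrowdBin.klBer ε (CrowdBin.phi (CrowdBin.tbar q pp pn v a)))
          ≤ (μ {ω | CrowdBin.errRate y yhat ω ≤ ε}).toReal) := by
  have hnvsum : 0 < ∑ i, v i ^ 2 := by
    obtain ⟨i0, hi0⟩ : ∃ i, v i ≠ 0 := by
      by_contra h
      push_neg at h
      exact hv (funext h)
    exact Finset.sum_pos' (fun i _ => sq_nonneg _)
      ⟨i0, Finset.mem_univ _, by positivity⟩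
  set nv : ℝ := Real.sqrt (∑ i, v i ^ 2) with hnvdef
  have hnv0 : 0 < nv := Real.sqrt_pos.2 hnvsum
  have hnvne : nv ≠ 0 := hnv0.ne'
  have hnvsq : nv ^ 2 = ∑ i, v i ^ 2 := Real.sq_sqrt hnvsum.le
  set t : ℝ := CrowdBin.tbar q pp pn v a with htdef
  set V : ℝ := CrowdBin.sigmaSq q v with hVdef
  set binf : ℝ := sSup {x : ℝ | ∃ i : Fin M, x = |v i|} with hbinfdef
  have hbinf : ∀ i, |v i| ≤ binf := by
    intro i
    apply le_csSup
    · have he : {x : ℝ | ∃ i : Fin M, x = |v i|} = Set.range (fun i => |v i|) := by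
        ext x
        simp [eq_comm]
      rw [he]
      exact (Set.finite_range _).bddAbove
    · exact ⟨i, rfl⟩
  have hbinf0 : 0 ≤ binf := le_trans (abs_nonneg (v ⟨0, hM⟩)) (hbinf ⟨0, hM⟩)
  have hcc : CrowdBin.cConst v = binf / nv := by
    rw [CrowdBin.cConst, ← hnvdef, ← hbinfdef]
  have htmin : t * nv = min ((∑ i, q i * v i * (2 * pp i - 1)) + a)
      ((∑ i, q i * v i * (2 * pn i - 1)) - a) := by
    rw [htdef, CrowdBin.tbar, ← hnvdef]
    field_simp
  set w₁ : Fin M → ℤ → ℝ := fun i x => CrowdBin.condLaw q pp pn i 1 x with hw₁def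
  set w₂ : Fin M → ℤ → ℝ := fun i x => CrowdBin.condLaw q pp pn i (-1) x with hw₂def
  set α₂ : Fin M → ℝ := fun i => 1 - pn i with hα₂def
  have hα₂0 : ∀ i, 0 ≤ α₂ i := fun i => by
    simp only [hα₂def]; linarith [hpn1 i]
  have hα₂1 : ∀ i, α₂ i ≤ 1 := fun i => by
    simp only [hα₂def]; linarith [hpn0 i]
  have hw₁0 : ∀ i, w₁ i 0 = 1 - q i := fun i => by
    norm_num [hw₁def, CrowdBin.condLaw]
  have hw₁1 : ∀ i, w₁ i 1 = q i * pp i := fun i => by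
    norm_num [hw₁def, CrowdBin.condLaw]
  have hw₁m : ∀ i, w₁ i (-1) = q i * (1 - pp i) := fun i => by
    norm_num [hw₁def, CrowdBin.condLaw]
  have hw₂0 : ∀ i, w₂ i 0 = 1 - q i := fun i => by
    norm_num [hw₂def, CrowdBin.condLaw]
  have hw₂1 : ∀ i, w₂ i 1 = q i * α₂ i := fun i => by
    norm_num [hw₂def, hα₂def, CrowdBin.condLaw]
  have hw₂m : ∀ i, w₂ i (-1) = q i * (1 - α₂ i) := fun i => by
    norm_num [hw₂def, hα₂def, CrowdBin.condLaw]
  set s₁ : ℝ := ∑ h ∈ CBAux.H M,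
    (if (∑ i, v i * (h i : ℝ)) + a ≤ 0 then ∏ i, w₁ i (h i) else 0) with hs₁def
  set s₂ : ℝ := ∑ h ∈ CBAux.H M,
    (if (∑ i, -v i * (h i : ℝ)) + -a ≤ 0 then ∏ i, w₂ i (h i) else 0) with hs₂def
  have hT₁ : t * nv ≤ (∑ i, v i * (q i * (2 * pp i - 1))) + a := by
    rw [htmin]
    refine le_trans (min_le_left _ _) (le_of_eq ?_)
    congr 1
    exact Finset.sum_congr rfl (fun i _ => by ring)
  have hT₂ : t * nv ≤ (∑ i, -v i * (q i * (2 * α₂ i - 1))) + -a := by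
    rw [htmin]
    refine le_trans (min_le_right _ _) (le_of_eq ?_)
    rw [sub_eq_add_neg]
    congr 1
    refine Finset.sum_congr rfl (fun i _ => ?_)
    simp only [hα₂def]
    ring
  have hnvsq₂ : nv ^ 2 = ∑ i, (-v i) ^ 2 := by
    rw [hnvsq]
    exact Finset.sum_congr rfl (fun i _ => by ring)
  have hbinf₂ : ∀ i, |(-v i)| ≤ binf := fun i => by
    rw [abs_neg]; exact hbinf i
  have hcs₁ := CBAux.chernoff_step v a q pp hq0 hq1 hpp0 hpp1 w₁ hw₁0 hw₁1 hw₁m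
  have hcs₂ := CBAux.chernoff_step (fun i => -v i) (-a) q α₂ hq0 hq1 hα₂0 hα₂1 w₂
    hw₂0 hw₂1 hw₂m
  have hs₁_h : 0 ≤ t → s₁ ≤ Real.exp (-t ^ 2 / 2) := fun ht0 =>
    CBAux.side_hoeffding v a q pp hq0 hq1 hpp0 hpp1 w₁ hcs₁ t nv hnv0 hnvsq ht0 hT₁
  have hs₂_h : 0 ≤ t → s₂ ≤ Real.exp (-t ^ 2 / 2) := fun ht0 =>
    CBAux.side_hoeffding (fun i => -v i) (-a) q α₂ hq0 hq1 hα₂0 hα₂1 w₂ hcs₂ t nv hnv0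
      hnvsq₂ ht0 hT₂
  set B1 : Fin N → Set Ω := fun j =>
    {ω | y j ω = 1 ∧ (∑ i, v i * (Z i j ω : ℝ)) + a ≤ 0} with hB1def
  set B2 : Fin N → Set Ω := fun j =>
    {ω | y j ω = -1 ∧ (∑ i, -v i * (Z i j ω : ℝ)) + -a ≤ 0} with hB2def
  set A : Fin N → Set Ω := fun j => B1 j ∪ B2 j with hAdef
  have hmeasB1 : ∀ j, (μ (B1 j)).toReal = pri * s₁ := by
    intro j
    have hlaw1 : ∀ h : Fin M → ℤ, (∀ i, h i = 0 ∨ h i = 1 ∨ h i = -1) →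
        (μ {ω | y j ω = 1 ∧ ∀ i, Z i j ω = h i}).toReal = pri * ∏ i, w₁ i (h i) := by
      intro h hh
      have hl := hlaw j 1 (Or.inl rfl) h hh
      simpa [hw₁def] using hl
    have h1 := CBAux.measure_event_eq μ (y j) (fun i => Z i j) (hym j) (fun i => hZm i j)
      (fun i ω => hZval i j ω) 1 pri w₁ hlaw1
      (fun h => (∑ i, v i * (h i : ℝ)) + a ≤ 0)
    have h2 : ∑ h ∈ CBAux.H M,
        (if (∑ i, v i * (h i : ℝ)) + a ≤ 0 then pri * ∏ i, w₁ i (h i) else 0)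
        = pri * s₁ := by
      rw [hs₁def, Finset.mul_sum]
      exact Finset.sum_congr rfl (fun h _ => by rw [mul_ite, mul_zero])
    exact h1.trans h2
  have hmeasB2 : ∀ j, (μ (B2 j)).toReal = (1 - pri) * s₂ := by
    intro j
    have hlaw2 : ∀ h : Fin M → ℤ, (∀ i, h i = 0 ∨ h i = 1 ∨ h i = -1) →
        (μ {ω | y j ω = -1 ∧ ∀ i, Z i j ω = h i}).toReal
          = (1 - pri) * ∏ i, w₂ i (h i) := by
      intro h hh
      have hl := hlaw j (-1) (Or.inr rfl) h hh
      simpa [hw₂def] using hl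
    have h1 := CBAux.measure_event_eq μ (y j) (fun i => Z i j) (hym j) (fun i => hZm i j)
      (fun i ω => hZval i j ω) (-1) (1 - pri) w₂ hlaw2
      (fun h => (∑ i, -v i * (h i : ℝ)) + -a ≤ 0)
    have h2 : ∑ h ∈ CBAux.H M,
        (if (∑ i, -v i * (h i : ℝ)) + -a ≤ 0 then (1 - pri) * ∏ i, w₂ i (h i) else 0)
        = (1 - pri) * s₂ := by
      rw [hs₂def, Finset.mul_sum]
      exact Finset.sum_congr rfl (fun h _ => by rw [mul_ite, mul_zero])
    exact h1.trans h2
  have hAle : ∀ j, (μ (A j)).toReal ≤ pri * s₁ + (1 - pri) * s₂ := by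
    intro j
    have h1 : μ (A j) ≤ μ (B1 j) + μ (B2 j) := measure_union_le _ _
    have h2 : (μ (A j)).toReal ≤ (μ (B1 j) + μ (B2 j)).toReal :=
      ENNReal.toReal_mono (ENNReal.add_ne_top.2 ⟨measure_ne_top μ _, measure_ne_top μ _⟩) h1
    rw [ENNReal.toReal_add (measure_ne_top μ _) (measure_ne_top μ _),
      hmeasB1 j, hmeasB2 j] at h2
    exact h2
  have hcombine : ∀ e : ℝ, s₁ ≤ e → s₂ ≤ e → pri * s₁ + (1 - pri) * s₂ ≤ e := by
    intro e h1 h2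
    nlinarith [mul_le_mul_of_nonneg_left h1 hpri0,
      mul_le_mul_of_nonneg_left h2 (by linarith : (0:ℝ) ≤ 1 - pri)]
  have hitem_h : 0 ≤ t → ∀ j, (μ (A j)).toReal ≤ Real.exp (-t ^ 2 / 2) := by
    intro ht0 j
    exact le_trans (hAle j) (hcombine _ (hs₁_h ht0) (hs₂_h ht0))
  have hV0 : 0 < t → 0 < V := by
    intro htpos
    have hqv : ∀ i, 0 ≤ q i * v i ^ 2 := fun i => mul_nonneg (hq0 i) (sq_nonneg _)
    rcases lt_or_eq_of_le (Finset.sum_nonneg (fun i (_ : i ∈ Finset.univ) => hqv i)) with h | h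
    · rw [hVdef, CrowdBin.sigmaSq]
      have : (0:ℝ) < (∑ i, v i ^ 2)⁻¹ := by positivity
      exact mul_pos this h
    · exfalso
      have hzero : ∀ i ∈ Finset.univ, q i * v i ^ 2 = 0 :=
        (Finset.sum_eq_zero_iff_of_nonneg (fun i _ => hqv i)).1 h.symm
      have hqvz : ∀ i, q i * v i = 0 := by
        intro i
        have h3 := hzero i (Finset.mem_univ i)
        rcases mul_eq_zero.1 h3 with h' | h'
        · rw [h', zero_mul]
        · rw [pow_eq_zero_iff (by norm_num : 2 ≠ 0)] at h'
          rw [h', mul_zero]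
      have hS1 : ∑ i, q i * v i * (2 * pp i - 1) = 0 :=
        Finset.sum_eq_zero (fun i _ => by rw [hqvz i, zero_mul])
      have hS2 : ∑ i, q i * v i * (2 * pn i - 1) = 0 :=
        Finset.sum_eq_zero (fun i _ => by rw [hqvz i, zero_mul])
      have htnv : 0 < t * nv := mul_pos htpos hnv0
      rw [htmin, hS1, hS2, zero_add, zero_sub] at htnv
      rcases le_total a 0 with h' | h'
      · linarith [lt_of_lt_of_le htnv (min_le_left a (-a))]
      · linarith [lt_of_lt_of_le htnv (min_le_right a (-a))]
  have hitem_b : 0 < t → ∀ j, (μ (A j)).toReal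
      ≤ Real.exp (-t ^ 2 / (2 * (V + binf / nv * t / 3))) := by
    intro htpos j
    have hVpos := hV0 htpos
    have hVeq₁ : V * nv ^ 2 = ∑ i, q i * v i ^ 2 := by
      rw [hVdef, CrowdBin.sigmaSq, hnvsq]
      field_simp
    have hVeq₂ : V * nv ^ 2 = ∑ i, q i * (-v i) ^ 2 := by
      rw [hVeq₁]
      exact Finset.sum_congr rfl (fun i _ => by ring)
    have hb₁ : s₁ ≤ Real.exp (-t ^ 2 / (2 * (V + binf / nv * t / 3))) :=
      CBAux.side_bernstein v a q pp hq0 hq1 hpp0 hpp1 w₁ hcs₁ t nv binf V hnv0 hnvsq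
        hbinf hbinf0 hVeq₁ hVpos htpos.le hT₁
    have hb₂ : s₂ ≤ Real.exp (-t ^ 2 / (2 * (V + binf / nv * t / 3))) :=
      CBAux.side_bernstein (fun i => -v i) (-a) q α₂ hq0 hq1 hα₂0 hα₂1 w₂ hcs₂ t nv binf V
        hnv0 hnvsq₂ hbinf₂ hbinf0 hVeq₂ hVpos htpos.le hT₂
    exact le_trans (hAle j) (hcombine _ hb₁ hb₂)
  have herr : ∀ j ω, yhat j ω ≠ y j ω → ω ∈ A j := by
    intro j ω hne
    have hAmem : A j = B1 j ∪ B2 j := rfl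
    rcases hyval j ω with hy | hy
    · have h1 : ω ∈ B1 j := by
        refine ⟨hy, ?_⟩
        by_contra hc
        push_neg at hc
        have h2 := hyhatpos j ω hc
        rw [h2, hy] at hne
        exact hne rfl
      rw [hAmem]
      exact Set.mem_union_left _ h1
    · have h1 : ω ∈ B2 j := by
        refine ⟨hy, ?_⟩
        show (∑ i, -v i * (Z i j ω : ℝ)) + -a ≤ 0
        have hsneg : (∑ i, -v i * (Z i j ω : ℝ)) = -∑ i, v i * (Z i j ω : ℝ) := by
          rw [← Finset.sum_neg_distrib]
          exact Finset.sum_congr rfl (fun i _ => by ring)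
        rw [hsneg]
        by_contra hc
        push_neg at hc
        have h2 := hyhatneg j ω (by linarith)
        rw [h2, hy] at hne
        exact hne rfl
      rw [hAmem]
      exact Set.mem_union_right _ h1
  have hNne : (N:ℝ) ≠ 0 := Nat.cast_ne_zero.2 hN.ne'
  have hNpos : (0:ℝ) < N := Nat.cast_pos.2 hN
  constructor
  · -- Part 1
    intro ht0
    rcases eq_or_lt_of_le ht0 with hteq | htpos
    · have h1 : Real.exp (-t ^ 2 / 2) = 1 := by rw [← hteq]; norm_num
      have h2 : Real.exp (-t ^ 2 / (2 * (V + CrowdBin.cConst v * t / 3))) = 1 := by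
        rw [← hteq]
        norm_num
      rw [h1, h2, min_self]
      have hb : ∀ j, (μ {ω | yhat j ω ≠ y j ω}).toReal ≤ 1 := by
        intro j
        rw [← ENNReal.toReal_one]
        exact ENNReal.toReal_mono ENNReal.one_ne_top prob_le_one
      calc (N:ℝ)⁻¹ * ∑ j, (μ {ω | yhat j ω ≠ y j ω}).toReal
          ≤ (N:ℝ)⁻¹ * ∑ _j : Fin N, (1:ℝ) :=
            mul_le_mul_of_nonneg_left (Finset.sum_le_sum fun j _ => hb j) (by positivity)
        _ = 1 := by
            rw [Finset.sum_const, Finset.card_univ, Fintype.card_fin, nsmul_eq_mul,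
              mul_one, inv_mul_cancel₀ hNne]
    · rw [hcc]
      have hitem : ∀ j, (μ {ω | yhat j ω ≠ y j ω}).toReal
          ≤ min (Real.exp (-t ^ 2 / 2)) (Real.exp (-t ^ 2 / (2 * (V + binf / nv * t / 3)))) := by
        intro j
        have hsub : {ω | yhat j ω ≠ y j ω} ⊆ A j := fun ω hω => herr j ω hω
        have hmono : (μ {ω | yhat j ω ≠ y j ω}).toReal ≤ (μ (A j)).toReal :=
          ENNReal.toReal_mono (measure_ne_top μ _) (measure_mono hsub)
        exact le_trans hmono (le_min (hitem_h ht0 j) (hitem_b htpos j))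
      calc (N:ℝ)⁻¹ * ∑ j, (μ {ω | yhat j ω ≠ y j ω}).toReal
          ≤ (N:ℝ)⁻¹ * ∑ _j : Fin N,
              min (Real.exp (-t ^ 2 / 2))
                (Real.exp (-t ^ 2 / (2 * (V + binf / nv * t / 3)))) :=
            mul_le_mul_of_nonneg_left (Finset.sum_le_sum fun j _ => hitem j) (by positivity)
        _ = min (Real.exp (-t ^ 2 / 2))
              (Real.exp (-t ^ 2 / (2 * (V + binf / nv * t / 3)))) := by
            rw [Finset.sum_const, Finset.card_univ, Fintype.card_fin, nsmul_eq_mul,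
              ← mul_assoc, inv_mul_cancel₀ hNne, one_mul]
  · -- Part 2
    intro ε hε0 hε1 htge
    classical
    have hL : 0 < Real.log (1 / ε) := Real.log_pos ((lt_div_iff₀ hε0).2 (by linarith))
    have hsq2 : 0 < Real.sqrt (2 * Real.log (1 / ε)) := Real.sqrt_pos.2 (by linarith)
    have htpos : 0 < t := lt_of_lt_of_le hsq2 htge
    have ht0 : 0 ≤ t := htpos.le
    set pbar : ℝ := Real.exp (-t ^ 2 / 2) with hpbardef
    have hpbar0 : 0 < pbar := Real.exp_pos _
    have hpbar1 : pbar < 1 := by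
      rw [hpbardef, show (1:ℝ) = Real.exp 0 from (Real.exp_zero).symm]
      exact Real.exp_lt_exp.2 (by nlinarith)
    have htsq : 2 * Real.log (1 / ε) ≤ t ^ 2 := by
      have hss := Real.sq_sqrt (by linarith : (0:ℝ) ≤ 2 * Real.log (1 / ε))
      have hpp' := pow_le_pow_left₀ (Real.sqrt_nonneg (2 * Real.log (1 / ε))) htge 2
      rw [hss] at hpp'
      exact hpp'
    have hlogeq : Real.log (1 / ε) = -Real.log ε := by rw [one_div, Real.log_inv]
    have hpε : pbar ≤ ε := by
      rw [hpbardef]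
      calc Real.exp (-t ^ 2 / 2) ≤ Real.exp (Real.log ε) := by
            apply Real.exp_le_exp.2
            rw [hlogeq] at htsq
            linarith
        _ = ε := Real.exp_log hε0
    -- measurability and independence
    have hXm : ∀ j, Measurable (fun ω => ((y j ω, fun i => Z i j ω) : ℤ × (Fin M → ℤ))) :=
      fun j => (hym j).prodMk (measurable_pi_lambda _ fun i => hZm i j)
    have hgm : Measurable (fun z : Fin M → ℤ => (∑ i, v i * (z i : ℝ)) + a) := by
      apply Measurable.add_const
      apply Finset.measurable_sum
      intro i _
      apply Measurable.const_mul
      exact Measurable.comp measurable_from_top (measurable_pi_apply i)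
    have hgm₂ : Measurable (fun z : Fin M → ℤ => (∑ i, -v i * (z i : ℝ)) + -a) := by
      apply Measurable.add_const
      apply Finset.measurable_sum
      intro i _
      apply Measurable.const_mul
      exact Measurable.comp measurable_from_top (measurable_pi_apply i)
    set Bset : Set (ℤ × (Fin M → ℤ)) :=
      {p | (p.1 = 1 ∧ (∑ i, v i * (p.2 i : ℝ)) + a ≤ 0)
        ∨ (p.1 = -1 ∧ (∑ i, -v i * (p.2 i : ℝ)) + -a ≤ 0)} with hBsetdef
    have hBm : MeasurableSet Bset := by
      apply MeasurableSet.union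
      · exact (measurable_fst (measurableSet_singleton 1)).inter
          ((hgm.comp measurable_snd) measurableSet_Iic)
      · exact (measurable_fst (measurableSet_singleton (-1))).inter
          ((hgm₂.comp measurable_snd) measurableSet_Iic)
    have hA_eq : ∀ j, A j = (fun ω => ((y j ω, fun i => Z i j ω) : ℤ × (Fin M → ℤ))) ⁻¹' Bset := by
      intro j
      ext ω
      simp only [hAdef, hB1def, hB2def, hBsetdef, Set.mem_union, Set.mem_setOf_eq,
        Set.mem_preimage]
    have hAmeas : ∀ j, MeasurableSet (A j) := fun j => by
      rw [hA_eq j]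
      exact (hXm j) hBm
    have hind : ∀ f : Fin N → Set Ω, (∀ j, f j = A j ∨ f j = (A j)ᶜ) →
        μ (⋂ j, f j) = ∏ j, μ (f j) := by
      intro f hf
      apply ProbabilityTheory.iIndepFun.meas_iInter hindep
      intro j
      have hAc : MeasurableSet[MeasurableSpace.comap
          (fun ω => ((y j ω, fun i => Z i j ω) : ℤ × (Fin M → ℤ))) inferInstance] (A j) :=
        ⟨Bset, hBm, (hA_eq j).symm⟩
      rcases hf j with h | h <;> rw [h]
      exacts [hAc, hAc.compl]
    have hbt := CBAux.binom_tail μ A hAmeas hind pbar ε (fun j => hitem_h ht0 j)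
      hpbar0 hpbar1 hε0 hε1 hpε
    -- measurability of the counting function
    have hcount : Measurable (fun ω => ∑ j, (A j).indicator (fun _ => (1:ℝ)) ω) := by
      apply Finset.measurable_sum
      intro j _
      exact Measurable.indicator measurable_const (hAmeas j)
    have hSmeas : MeasurableSet {ω | ε * N < ∑ j, (A j).indicator (fun _ => (1:ℝ)) ω} :=
      hcount measurableSet_Ioi
    have hsub : {ω | ε * N < ∑ j, (A j).indicator (fun _ => (1:ℝ)) ω}ᶜ
        ⊆ {ω | CrowdBin.errRate y yhat ω ≤ ε} := by
      intro ω hω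
      have hωS : ¬ (ε * N < ∑ j, (A j).indicator (fun _ => (1:ℝ)) ω) := hω
      push_neg at hωS
      show CrowdBin.errRate y yhat ω ≤ ε
      rw [CrowdBin.errRate]
      have hle : ∑ j, (if yhat j ω ≠ y j ω then (1:ℝ) else 0)
          ≤ ∑ j, (A j).indicator (fun _ => (1:ℝ)) ω := by
        apply Finset.sum_le_sum
        intro j _
        by_cases h : yhat j ω ≠ y j ω
        · rw [if_pos h, Set.indicator_of_mem (herr j ω h)]
        · rw [if_neg h]
          exact Set.indicator_nonneg (fun _ _ => zero_le_one) ω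
      calc (N:ℝ)⁻¹ * ∑ j, (if yhat j ω ≠ y j ω then (1:ℝ) else 0)
          ≤ (N:ℝ)⁻¹ * (ε * N) :=
            mul_le_mul_of_nonneg_left (le_trans hle hωS) (by positivity)
        _ = ε := by field_simp
    have hklrw : CrowdBin.klBer ε (CrowdBin.phi t)
        = ε * Real.log (ε / pbar) + (1 - ε) * Real.log ((1 - ε) / (1 - pbar)) := rfl
    rw [hklrw]
    have hcompl : (μ {ω | ε * N < ∑ j, (A j).indicator (fun _ => (1:ℝ)) ω}ᶜ).toReal
        = 1 - (μ {ω | ε * N < ∑ j, (A j).indicator (fun _ => (1:ℝ)) ω}).toReal := by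
      rw [prob_compl_eq_one_sub hSmeas,
        ENNReal.toReal_sub_of_le prob_le_one ENNReal.one_ne_top, ENNReal.toReal_one]
    have hmono2 : (μ {ω | ε * N < ∑ j, (A j).indicator (fun _ => (1:ℝ)) ω}ᶜ).toReal
        ≤ (μ {ω | CrowdBin.errRate y yhat ω ≤ ε}).toReal :=
      ENNReal.toReal_mono (measure_ne_top μ _) (measure_mono hsub)
    calc 1 - Real.exp (-(N:ℝ) *
          (ε * Real.log (ε / pbar) + (1 - ε) * Real.log ((1 - ε) / (1 - pbar))))
        ≤ 1 - (μ {ω | ε * N < ∑ j, (A j).indicator (fun _ => (1:ℝ)) ω}).toReal := by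
          linarith [hbt]
      _ = (μ {ω | ε * N < ∑ j, (A j).indicator (fun _ => (1:ℝ)) ω}ᶜ).toReal := hcompl.symm
      _ ≤ (μ {ω | CrowdBin.errRate y yhat ω ≤ ε}).toReal := hmono2
end
end

section
/- Under the homogeneous Dawid–Skene model with constant assignment probability q and weighted majority voting with weights v: setting t = (q/((L−1)·‖v‖₂))·Σ_{i=1}^M v_i·(L·w_i − 1), c = ‖v‖_∞/‖v‖₂ and σ² = q, (1) if t ≥ 0 then E[E_N] ≤ (L−1)·min{ exp(−t²/2), exp(−t²/(2·(σ² + c·t/3))) }; (2) if t ≤ 0 then E[E_N] ≥ 1 − min{ exp(−t²/2), exp(−t²/(2·(σ² − c·t/3))) }. -/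
open MeasureTheory ProbabilityTheory Real

noncomputable section

namespace CrowdHom

/-- Conditional law of `Z i j ∈ Fin (L+1)` (`0` = missing) given the true label `y j = k`
under the homogeneous Dawid–Skene model with constant assignment probability `q` and
worker accuracies `w`. -/
def condLaw {M L : ℕ} (q : ℝ) (w : Fin M → ℝ) (i : Fin M) (k : Fin L)
    (h : Fin (L + 1)) : ℝ :=
  if hz : h = 0 then 1 - q
  else q * (if h.pred hz = k then w i else (1 - w i) / ((L : ℝ) - 1))

/-- The quantity `t` of weighted majority voting under the homogeneous model. -/
def tWMV {M : ℕ} (L : ℕ) (q : ℝ) (w v : Fin M → ℝ) : ℝ :=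
  q / (((L : ℝ) - 1) * Real.sqrt (∑ i, v i ^ 2)) * ∑ i, v i * ((L : ℝ) * w i - 1)

/-- `c = ‖v‖_∞ / ‖v‖₂`. -/
def cConst {M : ℕ} (v : Fin M → ℝ) : ℝ :=
  (sSup {x : ℝ | ∃ i : Fin M, x = |v i|}) / Real.sqrt (∑ i, v i ^ 2)

end CrowdHom


open Finset
open scoped ENNReal

namespace AuxWMV


lemma summable_T (x : ℝ) : Summable (fun n : ℕ => x ^ n / (n + 2).factorial) := by
  apply Summable.of_norm_bounded (Real.summable_pow_div_factorial |x|)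
  intro n
  rw [norm_div, norm_pow, Real.norm_eq_abs, Real.norm_natCast]
  apply div_le_div_of_nonneg_left (by positivity) (by positivity)
  exact_mod_cast Nat.factorial_le (by omega)

/-- `T x = ∑ x^n/(n+2)!`. -/
noncomputable def T (x : ℝ) : ℝ := ∑' n : ℕ, x ^ n / (n + 2).factorial

lemma psi_eq (x : ℝ) : Real.exp x - 1 - x = x ^ 2 * T x := by
  have hs := Real.summable_pow_div_factorial x
  have hs1 : Summable (fun n : ℕ => x ^ (n + 1) / (n + 1).factorial) :=
    (summable_nat_add_iff 1).2 hs
  have h0 := Summable.tsum_eq_zero_add hs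
  have h1 := Summable.tsum_eq_zero_add hs1
  simp only [Real.exp_eq_exp_ℝ, NormedSpace.exp_eq_tsum_div]
  rw [h0, h1]
  have h2 : ∑' n : ℕ, x ^ (n + 1 + 1) / (n + 1 + 1).factorial = x ^ 2 * T x := by
    rw [T, ← tsum_mul_left]
    apply tsum_congr; intro n
    rw [← mul_div_assoc, ← pow_add]
    have e1 : n + 1 + 1 = 2 + n := by omega
    rw [e1]
  rw [h2]
  norm_num [Nat.factorial]

lemma T_mono {x u : ℝ} (h : |x| ≤ u) : T x ≤ T u := by
  apply Summable.tsum_le_tsum _ (summable_T x) (summable_T u)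
  intro n
  have hx : x ^ n ≤ u ^ n := by
    calc x ^ n ≤ |x ^ n| := le_abs_self _
    _ = |x| ^ n := abs_pow x n
    _ ≤ u ^ n := pow_le_pow_left₀ (abs_nonneg x) h n
  have hc : (0:ℝ) < (n + 2).factorial := by positivity
  exact (div_le_div_iff_of_pos_right hc).2 hx

lemma two_mul_pow_le_factorial (n : ℕ) : 2 * 3 ^ n ≤ (n + 2).factorial := by
  induction n with
  | zero => simp [Nat.factorial]
  | succ k ih =>
    have : (k + 3).factorial = (k + 3) * (k + 2).factorial := rfl
    calc 2 * 3 ^ (k + 1) = 3 * (2 * 3 ^ k) := by ring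
    _ ≤ 3 * (k + 2).factorial := by omega
    _ ≤ (k + 3) * (k + 2).factorial := by
        apply Nat.mul_le_mul_right; omega
    _ = (k + 3).factorial := this.symm

lemma T_le_geom {u : ℝ} (h0 : 0 ≤ u) (h3 : u < 3) : T u ≤ (2 * (1 - u / 3))⁻¹ := by
  have hr0 : (0:ℝ) ≤ u / 3 := by linarith
  have hr1 : u / 3 < 1 := by linarith
  have hgeom : ∑' n : ℕ, (1/2 : ℝ) * (u / 3) ^ n = (1/2) * (1 - u/3)⁻¹ := by
    rw [tsum_mul_left, tsum_geometric_of_lt_one hr0 hr1]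
  have hsumg : Summable (fun n : ℕ => (1/2 : ℝ) * (u / 3) ^ n) :=
    (summable_geometric_of_lt_one hr0 hr1).mul_left _
  have hle := Summable.tsum_le_tsum (f := fun n : ℕ => u ^ n / (n + 2).factorial)
      (g := fun n : ℕ => (1/2 : ℝ) * (u / 3) ^ n) ?_ (summable_T u) hsumg
  · rw [T]
    refine hle.trans ?_
    rw [hgeom, mul_inv]
    norm_num
  intro n
  have hf : (2 * 3 ^ n : ℝ) ≤ ((n + 2).factorial : ℝ) := by
    exact_mod_cast two_mul_pow_le_factorial n
  have hfp : (0:ℝ) < 2 * 3 ^ n := by positivity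
  calc u ^ n / ((n + 2).factorial : ℝ) ≤ u ^ n / (2 * 3 ^ n) := by
        apply div_le_div_of_nonneg_left ?_ hfp hf
        · exact pow_nonneg h0 n
  _ = (1/2) * (u / 3) ^ n := by
        rw [div_pow]
        ring

/-- Pointwise Bernstein-type bound. -/
lemma exp_le_quad {s u : ℝ} (hsu : |s| ≤ u) (hu3 : u < 3) :
    Real.exp s ≤ 1 + s + s ^ 2 * (2 * (1 - u / 3))⁻¹ := by
  have h0 : 0 ≤ u := (abs_nonneg s).trans hsu
  have h1 : T s ≤ (2 * (1 - u/3))⁻¹ := (T_mono hsu).trans (T_le_geom h0 hu3)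
  have h2 := psi_eq s
  nlinarith [sq_nonneg s]



lemma upos {p : ℝ} (hp0 : 0 ≤ p) (hp1 : p ≤ 1) (x : ℝ) :
    0 < p * Real.exp x + (1 - p) * Real.exp (-x) := by
  rcases lt_or_ge p 1 with h | h
  · have := Real.exp_pos (-x)
    have := Real.exp_pos x
    nlinarith [mul_nonneg hp0 (Real.exp_pos x).le]
  · have hp : p = 1 := le_antisymm hp1 h
    simp [hp, Real.exp_pos x]

/-- Hoeffding's lemma, two-point form. -/
lemma hoeffding_core {m : ℝ} (s : ℝ) (hm : -1 ≤ m) (hm' : m ≤ 1) :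
    (1 + m) / 2 * Real.exp s + (1 - m) / 2 * Real.exp (-s)
      ≤ Real.exp (m * s + s ^ 2 / 2) := by
  set p : ℝ := (1 + m) / 2 with hp_def
  have hp0 : 0 ≤ p := by simp only [hp_def]; linarith
  have hp1 : p ≤ 1 := by simp only [hp_def]; linarith
  set u : ℝ → ℝ := fun x => p * Real.exp x + (1 - p) * Real.exp (-x) with hu_def
  set u' : ℝ → ℝ := fun x => p * Real.exp x - (1 - p) * Real.exp (-x) with hu'_def
  have hupos : ∀ x, 0 < u x := upos hp0 hp1
  have hdu : ∀ x, HasDerivAt u (u' x) x := by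
    intro x
    have h1 : HasDerivAt (fun x : ℝ => Real.exp x) (Real.exp x) x := Real.hasDerivAt_exp x
    have h2 : HasDerivAt (fun x : ℝ => Real.exp (-x)) (-Real.exp (-x)) x := by
      exact ((Real.hasDerivAt_exp (-x)).comp x (hasDerivAt_neg x)).congr_deriv (by simp)
    have := (h1.const_mul p).add (h2.const_mul (1 - p))
    refine this.congr_deriv ?_
    simp only [hu'_def]; ring
  have hdu' : ∀ x, HasDerivAt u' (u x) x := by
    intro x
    have h1 : HasDerivAt (fun x : ℝ => Real.exp x) (Real.exp x) x := Real.hasDerivAt_exp x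
    have h2 : HasDerivAt (fun x : ℝ => Real.exp (-x)) (-Real.exp (-x)) x := by
      exact ((Real.hasDerivAt_exp (-x)).comp x (hasDerivAt_neg x)).congr_deriv (by simp)
    have := (h1.const_mul p).sub (h2.const_mul (1 - p))
    refine this.congr_deriv ?_
    simp only [hu_def]; ring
  set F : ℝ → ℝ := fun x => m * x + x ^ 2 / 2 - Real.log (u x) with hF_def
  set F1 : ℝ → ℝ := fun x => m + x - u' x / u x with hF1_def
  have hdF : ∀ x, HasDerivAt F (F1 x) x := by
    intro x
    have hlin : HasDerivAt (fun x : ℝ => m * x + x ^ 2 / 2) (m + x) x := by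
      have h1 : HasDerivAt (fun x : ℝ => m * x) m x := by
        simpa using (hasDerivAt_id x).const_mul m
      have h2 : HasDerivAt (fun x : ℝ => x ^ 2 / 2) x x := by
        simpa using (hasDerivAt_pow 2 x).div_const 2
      exact h1.add h2
    have hlog : HasDerivAt (fun x => Real.log (u x)) (u' x / u x) x :=
      (hdu x).log (hupos x).ne'
    exact hlin.sub hlog
  have hdF1 : ∀ x, HasDerivAt F1 ((u' x / u x) ^ 2) x := by
    intro x
    have hq : HasDerivAt (fun x => u' x / u x) ((u x * u x - u' x * u' x) / (u x) ^ 2) x :=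
      (hdu' x).div (hdu x) (hupos x).ne'
    have h2 : HasDerivAt (fun x : ℝ => m + x) 1 x := by
      simpa using (hasDerivAt_id x).const_add m
    have := h2.sub hq
    refine this.congr_deriv ?_
    have h3 : (u x) ^ 2 ≠ 0 := pow_ne_zero 2 (hupos x).ne'
    have h4 : u x ≠ 0 := (hupos x).ne'
    field_simp
    ring
  have hF1mono : Monotone F1 := by
    apply monotone_of_deriv_nonneg
    · exact fun x => (hdF1 x).differentiableAt
    · intro x
      rw [(hdF1 x).deriv]
      positivity
  have hF1zero : F1 0 = 0 := by
    simp only [hF1_def, hu_def, hu'_def, hp_def]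
    norm_num
    ring
  have hFzero : F 0 = 0 := by
    simp only [hF_def, hu_def]
    norm_num
  have hFnonneg : ∀ x, 0 ≤ F x := by
    intro x
    rcases le_or_gt 0 x with hx | hx
    · have hmono : MonotoneOn F (Set.Ici 0) := by
        apply monotoneOn_of_deriv_nonneg (convex_Ici 0)
        · exact Continuous.continuousOn (by
            fun_prop (disch := intro x; exact (hupos x).ne'))
        · intro x _
          exact (hdF x).differentiableAt.differentiableWithinAt
        · intro x hx
          rw [(hdF x).deriv]
          have : (0:ℝ) ≤ x := le_of_lt (by simpa using hx)
          calc (0:ℝ) = F1 0 := hF1zero.symm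
          _ ≤ F1 x := hF1mono this
      have := hmono (Set.self_mem_Ici) (Set.mem_Ici.2 hx) hx
      rwa [hFzero] at this
    · have hanti : AntitoneOn F (Set.Iic 0) := by
        apply antitoneOn_of_deriv_nonpos (convex_Iic 0)
        · exact Continuous.continuousOn (by
            fun_prop (disch := intro x; exact (hupos x).ne'))
        · intro x _
          exact (hdF x).differentiableAt.differentiableWithinAt
        · intro x hx
          rw [(hdF x).deriv]
          have hx0 : x ≤ (0:ℝ) := le_of_lt (by simpa using hx)
          calc F1 x ≤ F1 0 := hF1mono hx0
          _ = 0 := hF1zero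
      have := hanti (Set.mem_Iic.2 hx.le) (Set.self_mem_Iic) hx.le
      rwa [hFzero] at this
  have hkey := hFnonneg s
  have hlog : Real.log (u s) ≤ m * s + s ^ 2 / 2 := by
    simp only [hF_def] at hkey; linarith
  have := (Real.log_le_iff_le_exp (hupos s)).1 hlog
  calc (1 + m) / 2 * Real.exp s + (1 - m) / 2 * Real.exp (-s) = u s := by
        simp only [hu_def, hp_def]; ring
  _ ≤ Real.exp (m * s + s ^ 2 / 2) := this



lemma exp_add_exp_neg (s : ℝ) : 2 ≤ Real.exp s + Real.exp (-s) := by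
  have h1 := Real.exp_pos s
  have h2 : Real.exp s * Real.exp (-s) = 1 := by
    rw [← Real.exp_add]; simp
  nlinarith [sq_nonneg (Real.exp s - 1)]

/-- Hoeffding mgf bound for the 3-point distribution. -/
lemma mgf_H {a b : ℝ} (s : ℝ) (ha : 0 ≤ a) (hb : 0 ≤ b) (hab : a + b ≤ 1) :
    1 + a * (Real.exp (-s) - 1) + b * (Real.exp s - 1)
      ≤ Real.exp ((b - a) * s + s ^ 2 / 2) := by
  have hm : -1 ≤ b - a := by linarith
  have hm' : b - a ≤ 1 := by linarith
  have hkey := hoeffding_core (m := b - a) s hm hm'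
  have hc : 1 + a * (Real.exp (-s) - 1) + b * (Real.exp s - 1)
      ≤ (1 + (b - a)) / 2 * Real.exp s + (1 - (b - a)) / 2 * Real.exp (-s) := by
    have h2 := exp_add_exp_neg s
    nlinarith [Real.exp_pos s, Real.exp_pos (-s)]
  exact hc.trans hkey

/-- Bernstein mgf bound for the 3-point distribution. -/
lemma mgf_B {a b s u : ℝ} (ha : 0 ≤ a) (hb : 0 ≤ b) (hab : a + b ≤ 1)
    (hsu : |s| ≤ u) (hu3 : u < 3) :
    1 + a * (Real.exp (-s) - 1) + b * (Real.exp s - 1)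
      ≤ Real.exp ((b - a) * s + (a + b) * (s ^ 2 * (2 * (1 - u / 3))⁻¹)) := by
  set K : ℝ := (2 * (1 - u / 3))⁻¹ with hK
  have h1 : Real.exp s - 1 ≤ s + s ^ 2 * K := by
    have := exp_le_quad hsu hu3; linarith
  have h2 : Real.exp (-s) - 1 ≤ -s + s ^ 2 * K := by
    have := exp_le_quad (s := -s) (by simpa using hsu) hu3
    have e : (-s) ^ 2 = s ^ 2 := by ring
    rw [e] at this; linarith
  have hstep : 1 + a * (Real.exp (-s) - 1) + b * (Real.exp s - 1)
      ≤ 1 + ((b - a) * s + (a + b) * (s ^ 2 * K)) := by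
    have ha' := mul_le_mul_of_nonneg_left h2 ha
    have hb' := mul_le_mul_of_nonneg_left h1 hb
    nlinarith
  exact hstep.trans (by linarith [Real.add_one_le_exp ((b - a) * s + (a + b) * (s ^ 2 * K))])

/-- Chernoff bound for products of finite sums. -/
lemma chernoff_sum {M n : ℕ} (p : Fin M → Fin n → ℝ) (hp : ∀ i z, 0 ≤ p i z)
    (g : Fin n → ℝ) (v : Fin M → ℝ) (lam : ℝ) (hlam : 0 ≤ lam) :
    ∑ A ∈ Finset.univ.filter (fun A : Fin M → Fin n => 0 ≤ ∑ i, v i * g (A i)),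
        ∏ i, p i (A i)
      ≤ ∏ i, ∑ z, p i z * Real.exp (lam * (v i * g z)) := by
  rw [Finset.prod_univ_sum, Fintype.piFinset_univ]
  have hterm : ∀ A : Fin M → Fin n,
      ∏ i, (p i (A i) * Real.exp (lam * (v i * g (A i))))
        = (∏ i, p i (A i)) * Real.exp (lam * ∑ i, v i * g (A i)) := by
    intro A
    rw [Finset.prod_mul_distrib, ← Real.exp_sum, Finset.mul_sum]
  calc ∑ A ∈ Finset.univ.filter (fun A : Fin M → Fin n => 0 ≤ ∑ i, v i * g (A i)),
        ∏ i, p i (A i)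
      ≤ ∑ A ∈ Finset.univ.filter (fun A : Fin M → Fin n => 0 ≤ ∑ i, v i * g (A i)),
        ∏ i, (p i (A i) * Real.exp (lam * (v i * g (A i)))) := by
        apply Finset.sum_le_sum
        intro A hA
        rw [hterm A]
        have hS : 0 ≤ ∑ i, v i * g (A i) := (Finset.mem_filter.1 hA).2
        have h1 : 1 ≤ Real.exp (lam * ∑ i, v i * g (A i)) := by
          rw [← Real.exp_zero]
          exact Real.exp_le_exp.2 (mul_nonneg hlam hS)
        have hprod : 0 ≤ ∏ i, p i (A i) := Finset.prod_nonneg fun i _ => hp i (A i)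
        nlinarith
  _ ≤ ∑ A : Fin M → Fin n, ∏ i, (p i (A i) * Real.exp (lam * (v i * g (A i)))) := by
        apply Finset.sum_le_sum_of_subset_of_nonneg (Finset.filter_subset _ _)
        intro A _ _
        exact Finset.prod_nonneg fun i _ => mul_nonneg (hp i (A i)) (Real.exp_pos _).le
  _ = _ := rfl

/-- Value of the per-worker mgf sum. -/
lemma sum_two_point {n : ℕ} (p : Fin n → ℝ) (z₁ z₂ : Fin n) (hz : z₁ ≠ z₂) (s : ℝ) :
    ∑ z, p z * Real.exp (s * ((if z = z₂ then (1:ℝ) else 0) - if z = z₁ then 1 else 0))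
      = (∑ z, p z) + p z₁ * (Real.exp (-s) - 1) + p z₂ * (Real.exp s - 1) := by
  set f : Fin n → ℝ :=
    fun z => p z * Real.exp (s * ((if z = z₂ then (1:ℝ) else 0) - if z = z₁ then 1 else 0))
    with hf
  have hz₂ : z₂ ∈ Finset.univ.erase z₁ := Finset.mem_erase.2 ⟨hz.symm, Finset.mem_univ _⟩
  rw [← Finset.add_sum_erase _ f (Finset.mem_univ z₁), ← Finset.add_sum_erase _ f hz₂,
    ← Finset.add_sum_erase _ p (Finset.mem_univ z₁), ← Finset.add_sum_erase _ p hz₂]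
  have hrest : ∑ z ∈ (Finset.univ.erase z₁).erase z₂, f z
      = ∑ z ∈ (Finset.univ.erase z₁).erase z₂, p z := by
    apply Finset.sum_congr rfl
    intro z hzm
    have h2 : z ≠ z₂ := (Finset.mem_erase.1 hzm).1
    have h1 : z ≠ z₁ := (Finset.mem_erase.1 (Finset.mem_erase.1 hzm).2).1
    simp [hf, h1, h2]
  rw [hrest]
  have hfz₁ : f z₁ = p z₁ * Real.exp (-s) := by simp [hf, hz]
  have hfz₂ : f z₂ = p z₂ * Real.exp s := by simp [hf, hz.symm]
  rw [hfz₁, hfz₂]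
  ring



lemma pipeline {M n : ℕ} (p : Fin M → Fin n → ℝ) (hp : ∀ i z, 0 ≤ p i z)
    (hsum : ∀ i, ∑ z, p i z = 1) (z₁ z₂ : Fin n) (hz : z₁ ≠ z₂)
    (v : Fin M → ℝ) (lam : ℝ) (hlam : 0 ≤ lam) (φ : Fin M → ℝ)
    (hφ : ∀ i, 1 + p i z₁ * (Real.exp (-(lam * v i)) - 1)
        + p i z₂ * (Real.exp (lam * v i) - 1) ≤ Real.exp (φ i)) :
    ∑ A ∈ Finset.univ.filter
        (fun A : Fin M → Fin n =>
          0 ≤ ∑ i, v i * ((if A i = z₂ then (1:ℝ) else 0) - if A i = z₁ then 1 else 0)),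
      ∏ i, p i (A i) ≤ Real.exp (∑ i, φ i) := by
  have hch := chernoff_sum p hp
    (fun z => (if z = z₂ then (1:ℝ) else 0) - if z = z₁ then 1 else 0) v lam hlam
  refine hch.trans ?_
  rw [Real.exp_sum]
  apply Finset.prod_le_prod
  · intro i _
    exact Finset.sum_nonneg fun z _ => mul_nonneg (hp i z) (Real.exp_pos _).le
  · intro i _
    have heq : ∀ z : Fin n, lam * (v i * ((if z = z₂ then (1:ℝ) else 0) - if z = z₁ then 1 else 0))
        = (lam * v i) * ((if z = z₂ then (1:ℝ) else 0) - if z = z₁ then 1 else 0) := by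
      intro z; ring
    calc ∑ z, p i z * Real.exp (lam * (v i * ((if z = z₂ then (1:ℝ) else 0) - if z = z₁ then 1 else 0)))
        = ∑ z, p i z * Real.exp ((lam * v i) * ((if z = z₂ then (1:ℝ) else 0) - if z = z₁ then 1 else 0)) := by
          simp only [heq]
    _ = (∑ z, p i z) + p i z₁ * (Real.exp (-(lam * v i)) - 1)
          + p i z₂ * (Real.exp (lam * v i) - 1) := sum_two_point (p i) z₁ z₂ hz (lam * v i)
    _ ≤ Real.exp (φ i) := by rw [hsum i]; exact hφ i


lemma key_measure {Ω : Type*} [MeasurableSpace Ω] (μ : Measure Ω) [IsProbabilityMeasure μ]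
    {M N L : ℕ} (y : Fin N → Ω → Fin L) (Z : Fin M → Fin N → Ω → Fin (L + 1))
    (hym : ∀ j, Measurable (y j)) (hZm : ∀ i j, Measurable (Z i j))
    (pri : Fin L → ℝ) (q : ℝ) (w : Fin M → ℝ)
    (hlaw : ∀ (j : Fin N) (k : Fin L) (h : Fin M → Fin (L + 1)),
      (μ {ω | y j ω = k ∧ ∀ i, Z i j ω = h i}).toReal
        = pri k * ∏ i, CrowdHom.condLaw q w i k (h i))
    (j : Fin N) (k : Fin L) (S : Finset (Fin M → Fin (L + 1))) :
    (μ {ω | y j ω = k ∧ (fun i => Z i j ω) ∈ S}).toReal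
      = pri k * ∑ A ∈ S, ∏ i, CrowdHom.condLaw q w i k (A i) := by
  classical
  have hset : {ω | y j ω = k ∧ (fun i => Z i j ω) ∈ S}
      = ⋃ A ∈ S, {ω | y j ω = k ∧ ∀ i, Z i j ω = A i} := by
    ext ω
    simp only [Set.mem_setOf_eq, Set.mem_iUnion, exists_prop]
    constructor
    · rintro ⟨h1, h2⟩
      exact ⟨fun i => Z i j ω, h2, h1, fun i => rfl⟩
    · rintro ⟨A, hA, h1, h2⟩
      have hAeq : (fun i => Z i j ω) = A := funext h2
      exact ⟨h1, hAeq ▸ hA⟩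
  have hmeas : ∀ A : Fin M → Fin (L + 1),
      MeasurableSet {ω | y j ω = k ∧ ∀ i, Z i j ω = A i} := by
    intro A
    have h1 : MeasurableSet {ω | y j ω = k} := hym j (measurableSet_singleton k)
    have h2 : MeasurableSet {ω | ∀ i, Z i j ω = A i} := by
      rw [Set.setOf_forall]
      exact MeasurableSet.iInter fun i => hZm i j (measurableSet_singleton (A i))
    exact h1.inter h2
  have hdisj : (S : Set (Fin M → Fin (L + 1))).PairwiseDisjoint
      (fun A => {ω | y j ω = k ∧ ∀ i, Z i j ω = A i}) := by
    intro A _ B _ hAB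
    rw [Function.onFun, Set.disjoint_left]
    rintro ω ⟨_, h2⟩ ⟨_, h4⟩
    exact hAB (funext fun i => (h2 i).symm.trans (h4 i))
  rw [hset, measure_biUnion_finset hdisj (fun A _ => hmeas A),
    ENNReal.toReal_sum (fun A _ => measure_ne_top μ _)]
  rw [Finset.mul_sum]
  exact Finset.sum_congr rfl fun A _ => hlaw j k A

lemma pri_sum_one {Ω : Type*} [MeasurableSpace Ω] (μ : Measure Ω) [IsProbabilityMeasure μ]
    {N L : ℕ} (hN : 0 < N) (y : Fin N → Ω → Fin L)
    (hym : ∀ j, Measurable (y j)) (pri : Fin L → ℝ)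
    (hprior : ∀ (j : Fin N) (k : Fin L), (μ {ω | y j ω = k}).toReal = pri k) :
    ∑ k, pri k = 1 := by
  classical
  set j : Fin N := ⟨0, hN⟩
  have hset : (Set.univ : Set Ω) = ⋃ k ∈ (univ : Finset (Fin L)), {ω | y j ω = k} := by
    ext ω
    simp only [Set.mem_univ, Set.mem_iUnion, exists_prop, true_iff]
    exact ⟨y j ω, Finset.mem_univ _, rfl⟩
  have hdisj : ((univ : Finset (Fin L)) : Set (Fin L)).PairwiseDisjoint
      (fun k => {ω | y j ω = k}) := by
    intro a _ b _ hab
    rw [Function.onFun, Set.disjoint_left]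
    rintro ω h1 h2
    exact hab ((h1 : y j ω = a).symm.trans h2)
  have h1 : (1 : ℝ≥0∞) = ∑ k, μ {ω | y j ω = k} := by
    rw [← measure_univ (μ := μ), hset,
      measure_biUnion_finset hdisj (fun k _ => hym j (measurableSet_singleton k))]
  have h2 : (1 : ℝ) = ∑ k, (μ {ω | y j ω = k}).toReal := by
    have := congrArg ENNReal.toReal h1
    rwa [ENNReal.toReal_sum (fun k _ => measure_ne_top μ _), ENNReal.toReal_one] at this
  rw [show ∑ k, pri k = ∑ k, (μ {ω | y j ω = k}).toReal from
    Finset.sum_congr rfl fun k _ => (hprior j k).symm]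
  exact h2.symm


end AuxWMV

section MainProof

open MeasureTheory ProbabilityTheory Real Finset
open scoped ENNReal

set_option maxHeartbeats 3000000 in
/-- Under the homogeneous Dawid–Skene model with constant assignment
probability `q` and weighted majority voting with weights `v`: with
`t = (q/((L−1)‖v‖₂))·Σ_i v_i(L w_i − 1)`, `c = ‖v‖_∞/‖v‖₂` and `σ² = q`:
(1) if `t ≥ 0` then `E[E_N] ≤ (L−1)·min{exp(−t²/2), exp(−t²/(2(σ² + c t/3)))}`;
(2) if `t ≤ 0` then `E[E_N] ≥ 1 − min{exp(−t²/2), exp(−t²/(2(σ² − c t/3)))}`. -/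
theorem wmv_mean_error_rate_bounds
    {Ω : Type*} [MeasurableSpace Ω] (μ : Measure Ω) [IsProbabilityMeasure μ]
    {M N L : ℕ} (hM : 0 < M) (hN : 0 < N) (hL : 2 ≤ L)
    (y : Fin N → Ω → Fin L) (Z : Fin M → Fin N → Ω → Fin (L + 1))
    (hym : ∀ j, Measurable (y j)) (hZm : ∀ i j, Measurable (Z i j))
    (pri : Fin L → ℝ) (q : ℝ) (w : Fin M → ℝ)
    (hpri : ∀ k, 0 ≤ pri k) (hq0 : 0 < q) (hq1 : q ≤ 1)
    (hw0 : ∀ i, 0 ≤ w i) (hw1 : ∀ i, w i ≤ 1)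
    (hprior : ∀ (j : Fin N) (k : Fin L), (μ {ω | y j ω = k}).toReal = pri k)
    (hlaw : ∀ (j : Fin N) (k : Fin L) (h : Fin M → Fin (L + 1)),
      (μ {ω | y j ω = k ∧ ∀ i, Z i j ω = h i}).toReal
        = pri k * ∏ i, CrowdHom.condLaw q w i k (h i))
    (hindep : iIndepFun (fun j ω => (y j ω, fun i => Z i j ω)) μ)
    (v : Fin M → ℝ) (hv : v ≠ 0)
    (yhat : Fin N → Ω → Fin L) (hyhatm : ∀ j, Measurable (yhat j))
    (hyhat : ∀ (j : Fin N) (ω : Ω) (k : Fin L),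
      (∑ i, v i * (if Z i j ω = k.succ then (1 : ℝ) else 0))
        ≤ ∑ i, v i * (if Z i j ω = (yhat j ω).succ then (1 : ℝ) else 0)) :
    (0 ≤ CrowdHom.tWMV L q w v →
      (N : ℝ)⁻¹ * ∑ j, (μ {ω | yhat j ω ≠ y j ω}).toReal
        ≤ ((L : ℝ) - 1) * min
            (Real.exp (-(CrowdHom.tWMV L q w v) ^ 2 / 2))
            (Real.exp (-(CrowdHom.tWMV L q w v) ^ 2 /
              (2 * (q + CrowdHom.cConst v * CrowdHom.tWMV L q w v / 3)))))
    ∧ (CrowdHom.tWMV L q w v ≤ 0 →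
      1 - min
          (Real.exp (-(CrowdHom.tWMV L q w v) ^ 2 / 2))
          (Real.exp (-(CrowdHom.tWMV L q w v) ^ 2 /
            (2 * (q - CrowdHom.cConst v * CrowdHom.tWMV L q w v / 3))))
        ≤ (N : ℝ)⁻¹ * ∑ j, (μ {ω | yhat j ω ≠ y j ω}).toReal) := by
  classical
  -- abbreviations
  set D := Real.sqrt (∑ i, v i ^ 2) with hD_def
  set SS := ∑ i, v i * ((L : ℝ) * w i - 1) with hSS_def
  set binf := sSup {x : ℝ | ∃ i : Fin M, x = |v i|} with hbinf_def
  set t := CrowdHom.tWMV L q w v with ht_def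
  set c := CrowdHom.cConst v with hc_def
  -- basic numeric facts
  have hL2 : (2 : ℝ) ≤ (L : ℝ) := by exact_mod_cast hL
  have hLm1 : (0 : ℝ) < (L : ℝ) - 1 := by linarith
  have hvsum : 0 < ∑ i, v i ^ 2 := by
    have hex : ∃ i, v i ≠ 0 := by
      by_contra hcon; push_neg at hcon; exact hv (funext hcon)
    obtain ⟨i0, hi0⟩ := hex
    exact Finset.sum_pos' (fun i _ => sq_nonneg (v i))
      ⟨i0, Finset.mem_univ _, lt_of_le_of_ne (sq_nonneg _) (Ne.symm (pow_ne_zero 2 hi0))⟩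
  have hD : 0 < D := by rw [hD_def]; exact Real.sqrt_pos.2 hvsum
  have hD2 : D ^ 2 = ∑ i, v i ^ 2 := by rw [hD_def]; exact Real.sq_sqrt hvsum.le
  have hbinf_mem : ∃ i, |v i| = binf := by
    have h1 : {x : ℝ | ∃ i : Fin M, x = |v i|} = Set.range (fun i => |v i|) := by
      ext x; simp [eq_comm]
    have h2 : (Set.range (fun i : Fin M => |v i|)).Nonempty :=
      Set.range_nonempty (f := fun i : Fin M => |v i|) (h := ⟨⟨0, hM⟩⟩)
    have h3 := Set.Nonempty.csSup_mem h2 (Set.finite_range _)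
    rw [hbinf_def, h1]
    exact h3
  have hbinf_le : ∀ i, |v i| ≤ binf := by
    intro i
    have h1 : {x : ℝ | ∃ i : Fin M, x = |v i|} = Set.range (fun i => |v i|) := by
      ext x; simp [eq_comm]
    rw [hbinf_def, h1]
    exact le_csSup (Set.finite_range _).bddAbove ⟨i, rfl⟩
  have hbinf0 : 0 ≤ binf := by
    obtain ⟨i, hi⟩ := hbinf_mem
    exact hi ▸ abs_nonneg (v i)
  have hc_eq : c = binf / D := by rw [hc_def, hbinf_def, hD_def]; rfl
  have hc0 : 0 ≤ c := by rw [hc_eq]; exact div_nonneg hbinf0 hD.le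
  have hbD : binf = c * D := by rw [hc_eq, div_mul_cancel₀ _ hD.ne']
  have ht_eq : t = q / (((L : ℝ) - 1) * D) * SS := by
    rw [ht_def, hD_def, hSS_def]; rfl
  have htD : t * D = q / ((L : ℝ) - 1) * SS := by
    rw [ht_eq]; field_simp
  -- conditional law facts
  set aa : Fin M → ℝ := fun i => q * w i with haa_def
  set bb : Fin M → ℝ := fun i => q * ((1 - w i) / ((L : ℝ) - 1)) with hbb_def
  have haa : ∀ i, 0 ≤ aa i := fun i => mul_nonneg hq0.le (hw0 i)
  have hbb : ∀ i, 0 ≤ bb i :=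
    fun i => mul_nonneg hq0.le (div_nonneg (by linarith [hw1 i]) hLm1.le)
  have hab_q : ∀ i, aa i + bb i ≤ q := by
    intro i
    have h1 : (1 - w i) / ((L : ℝ) - 1) ≤ 1 - w i := by
      apply div_le_self (by linarith [hw1 i]) (by linarith)
    calc aa i + bb i ≤ q * w i + q * (1 - w i) := by
          apply add_le_add_right
          exact mul_le_mul_of_nonneg_left h1 hq0.le
    _ = q := by ring
  have hab1 : ∀ i, aa i + bb i ≤ 1 := fun i => (hab_q i).trans hq1
  have hp_nonneg : ∀ (k : Fin L) (i : Fin M) (z : Fin (L + 1)),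
      0 ≤ CrowdHom.condLaw q w i k z := by
    intro k i z
    unfold CrowdHom.condLaw
    split
    · linarith
    · apply mul_nonneg hq0.le
      split
      · exact hw0 i
      · exact div_nonneg (by linarith [hw1 i]) hLm1.le
  have hp_succ : ∀ (k : Fin L) (i : Fin M) (k' : Fin L),
      CrowdHom.condLaw q w i k k'.succ
        = q * (if k' = k then w i else (1 - w i) / ((L : ℝ) - 1)) := by
    intro k i k'
    unfold CrowdHom.condLaw
    rw [dif_neg (Fin.succ_ne_zero k'), Fin.pred_succ]
  have hp_at_k : ∀ (k : Fin L) (i : Fin M),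
      CrowdHom.condLaw q w i k k.succ = aa i := by
    intro k i; rw [hp_succ, if_pos rfl, haa_def]
  have hp_at_h : ∀ (k h' : Fin L) (i : Fin M), h' ≠ k →
      CrowdHom.condLaw q w i k h'.succ = bb i := by
    intro k h' i hne; rw [hp_succ, if_neg hne, hbb_def]
  have hp_sum : ∀ (k : Fin L) (i : Fin M),
      ∑ z, CrowdHom.condLaw q w i k z = 1 := by
    intro k i
    rw [Fin.sum_univ_succ]
    have h0 : CrowdHom.condLaw q w i k 0 = 1 - q := by
      unfold CrowdHom.condLaw; simp
    have htail : ∑ k' : Fin L, CrowdHom.condLaw q w i k k'.succ = q := by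
      simp only [hp_succ]
      rw [← Finset.mul_sum]
      have hin : ∑ k' : Fin L, (if k' = k then w i else (1 - w i) / ((L : ℝ) - 1)) = 1 := by
        rw [← Finset.add_sum_erase _ _ (Finset.mem_univ k), if_pos rfl]
        have hrest : ∑ k' ∈ Finset.univ.erase k,
            (if k' = k then w i else (1 - w i) / ((L : ℝ) - 1))
            = ((L : ℝ) - 1) * ((1 - w i) / ((L : ℝ) - 1)) := by
          rw [Finset.sum_congr rfl (fun x hx => if_neg (Finset.mem_erase.1 hx).1)]
          rw [Finset.sum_const, Finset.card_erase_of_mem (Finset.mem_univ k),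
            Finset.card_univ, Fintype.card_fin, nsmul_eq_mul]
          congr 1
          rw [Nat.cast_sub (by omega : 1 ≤ L), Nat.cast_one]
        rw [hrest]
        field_simp
        ring
      rw [hin, mul_one]
    rw [h0, htail]
    ring
  -- prior sums to one
  have hpri_sum : ∑ k, pri k = 1 := AuxWMV.pri_sum_one μ hN y hym pri hprior
  -- sum identities
  have hsum_ba : ∑ i, (bb i - aa i) * v i = -(t * D) := by
    have hterm : ∀ i, (bb i - aa i) * v i
        = -(q / ((L : ℝ) - 1) * (v i * ((L : ℝ) * w i - 1))) := by
      intro i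
      rw [hbb_def, haa_def]
      field_simp
      ring
    rw [Finset.sum_congr rfl (fun i _ => hterm i), Finset.sum_neg_distrib,
      ← Finset.mul_sum, ← hSS_def, htD]
  have hsum_ab : ∑ i, (aa i - bb i) * v i = t * D := by
    have h1 : ∑ i, (aa i - bb i) * v i = -∑ i, (bb i - aa i) * v i := by
      rw [← Finset.sum_neg_distrib]
      exact Finset.sum_congr rfl fun i _ => by ring
    rw [h1, hsum_ba]; ring
  -- the per-event bound via the Chernoff pipeline
  have EV : ∀ (j : Fin N) (k : Fin L) (z₁ z₂ : Fin L), z₁ ≠ z₂ →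
      ∀ (lam : ℝ), 0 ≤ lam → ∀ (φ : Fin M → ℝ),
      (∀ i, 1 + CrowdHom.condLaw q w i k z₁.succ * (Real.exp (-(lam * v i)) - 1)
          + CrowdHom.condLaw q w i k z₂.succ * (Real.exp (lam * v i) - 1)
        ≤ Real.exp (φ i)) →
      (μ {ω | y j ω = k ∧ 0 ≤ ∑ i, v i * ((if Z i j ω = z₂.succ then (1 : ℝ) else 0)
          - if Z i j ω = z₁.succ then 1 else 0)}).toReal
        ≤ pri k * Real.exp (∑ i, φ i) := by
    intro j k z₁ z₂ hz lam hlam φ hφ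
    have hzsucc : (z₁.succ : Fin (L + 1)) ≠ z₂.succ := fun hcon => hz (Fin.succ_inj.1 hcon)
    set S : Finset (Fin M → Fin (L + 1)) := Finset.univ.filter
      (fun A : Fin M → Fin (L + 1) =>
        0 ≤ ∑ i, v i * ((if A i = z₂.succ then (1 : ℝ) else 0)
          - if A i = z₁.succ then 1 else 0)) with hS_def
    have hset : {ω | y j ω = k ∧ 0 ≤ ∑ i, v i * ((if Z i j ω = z₂.succ then (1 : ℝ) else 0)
        - if Z i j ω = z₁.succ then 1 else 0)}
        = {ω | y j ω = k ∧ (fun i => Z i j ω) ∈ S} := by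
      ext ω
      simp only [Set.mem_setOf_eq, hS_def, Finset.mem_filter, Finset.mem_univ, true_and]
    rw [hset, AuxWMV.key_measure μ y Z hym hZm pri q w hlaw j k S]
    apply mul_le_mul_of_nonneg_left ?_ (hpri k)
    exact AuxWMV.pipeline _ (fun i z => hp_nonneg k i z) (hp_sum k)
      z₁.succ z₂.succ hzsucc v lam hlam φ hφ
  -- aggregation (upper bound direction)
  have AGG_up : ∀ e : ℝ, (∀ (j : Fin N) (k h' : Fin L), h' ≠ k →
        (μ {ω | y j ω = k ∧ 0 ≤ ∑ i, v i * ((if Z i j ω = h'.succ then (1 : ℝ) else 0)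
          - if Z i j ω = k.succ then 1 else 0)}).toReal ≤ pri k * Real.exp e) →
      (N : ℝ)⁻¹ * ∑ j, (μ {ω | yhat j ω ≠ y j ω}).toReal ≤ ((L : ℝ) - 1) * Real.exp e := by
    intro e he
    have hj : ∀ j, (μ {ω | yhat j ω ≠ y j ω}).toReal ≤ ((L : ℝ) - 1) * Real.exp e := by
      intro j
      set E : Fin L → Fin L → Set Ω := fun k h' =>
        {ω | y j ω = k ∧ 0 ≤ ∑ i, v i * ((if Z i j ω = h'.succ then (1 : ℝ) else 0)
          - if Z i j ω = k.succ then 1 else 0)} with hE_def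
      have hsub : {ω | yhat j ω ≠ y j ω}
          ⊆ ⋃ k ∈ (Finset.univ : Finset (Fin L)), ⋃ h' ∈ Finset.univ.erase k, E k h' := by
        intro ω hω
        simp only [Set.mem_iUnion, exists_prop]
        refine ⟨y j ω, Finset.mem_univ _, yhat j ω,
          Finset.mem_erase.2 ⟨hω, Finset.mem_univ _⟩, rfl, ?_⟩
        have h1 := sub_nonneg.2 (hyhat j ω (y j ω))
        rw [← Finset.sum_sub_distrib] at h1
        calc (0:ℝ) ≤ _ := h1
        _ = _ := Finset.sum_congr rfl fun i _ => by ring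
      have h1 : μ {ω | yhat j ω ≠ y j ω}
          ≤ ∑ k, ∑ h' ∈ Finset.univ.erase k, μ (E k h') :=
        (measure_mono hsub).trans ((measure_biUnion_finset_le _ _).trans
          (Finset.sum_le_sum fun k _ => measure_biUnion_finset_le _ _))
      have hne : (∑ k, ∑ h' ∈ Finset.univ.erase k, μ (E k h')) ≠ ⊤ :=
        (ENNReal.sum_lt_top.2 fun k _ =>
          ENNReal.sum_lt_top.2 fun h' _ => measure_lt_top μ _).ne
      have h2 : (μ {ω | yhat j ω ≠ y j ω}).toReal
          ≤ ∑ k, ∑ h' ∈ Finset.univ.erase k, (μ (E k h')).toReal := by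
        have h3 := ENNReal.toReal_mono hne h1
        rwa [ENNReal.toReal_sum (fun k _ => (ENNReal.sum_lt_top.2
            fun h' _ => measure_lt_top μ _).ne),
          Finset.sum_congr rfl (fun k _ => ENNReal.toReal_sum
            (fun h' _ => measure_ne_top μ _))] at h3
      refine h2.trans ?_
      have h3 : ∀ k, ∑ h' ∈ Finset.univ.erase k, (μ (E k h')).toReal
          ≤ ((L : ℝ) - 1) * (pri k * Real.exp e) := by
        intro k
        calc ∑ h' ∈ Finset.univ.erase k, (μ (E k h')).toReal
            ≤ ∑ _h' ∈ Finset.univ.erase k, pri k * Real.exp e :=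
              Finset.sum_le_sum fun h' hh' => he j k h' (Finset.mem_erase.1 hh').1
        _ = ((Finset.univ.erase k).card : ℝ) * (pri k * Real.exp e) := by
              rw [Finset.sum_const, nsmul_eq_mul]
        _ = ((L : ℝ) - 1) * (pri k * Real.exp e) := by
              rw [Finset.card_erase_of_mem (Finset.mem_univ k), Finset.card_univ,
                Fintype.card_fin, Nat.cast_sub (by omega : 1 ≤ L), Nat.cast_one]
      calc ∑ k, ∑ h' ∈ Finset.univ.erase k, (μ (E k h')).toReal
          ≤ ∑ k, ((L : ℝ) - 1) * (pri k * Real.exp e) :=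
            Finset.sum_le_sum fun k _ => h3 k
      _ = ((L : ℝ) - 1) * Real.exp e * ∑ k, pri k := by
            rw [Finset.mul_sum]
            exact Finset.sum_congr rfl fun k _ => by ring
      _ = ((L : ℝ) - 1) * Real.exp e := by rw [hpri_sum, mul_one]
    have hNpos : (0 : ℝ) < (N : ℝ) := by exact_mod_cast hN
    have hsumj : ∑ j, (μ {ω | yhat j ω ≠ y j ω}).toReal
        ≤ (N : ℝ) * (((L : ℝ) - 1) * Real.exp e) := by
      calc ∑ j, (μ {ω | yhat j ω ≠ y j ω}).toReal
          ≤ ∑ _j : Fin N, ((L : ℝ) - 1) * Real.exp e := Finset.sum_le_sum fun j _ => hj j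
      _ = (N : ℝ) * (((L : ℝ) - 1) * Real.exp e) := by
            rw [Finset.sum_const, Finset.card_univ, Fintype.card_fin, nsmul_eq_mul]
    calc (N : ℝ)⁻¹ * ∑ j, (μ {ω | yhat j ω ≠ y j ω}).toReal
        ≤ (N : ℝ)⁻¹ * ((N : ℝ) * (((L : ℝ) - 1) * Real.exp e)) :=
          mul_le_mul_of_nonneg_left hsumj (by positivity)
    _ = ((L : ℝ) - 1) * Real.exp e := by field_simp
  -- choice of a wrong label
  have hL0 : 0 < L := by omega
  have hL1' : 1 < L := by omega
  set hfun : Fin L → Fin L := fun k => if k = ⟨0, hL0⟩ then ⟨1, hL1'⟩ else ⟨0, hL0⟩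
    with hfun_def
  have hfun_ne : ∀ k, hfun k ≠ k := by
    intro k
    simp only [hfun_def]
    by_cases hk : k = ⟨0, hL0⟩
    · rw [if_pos hk, hk]
      simp [Fin.ext_iff]
    · rw [if_neg hk]
      exact fun hcon => hk hcon.symm
  -- aggregation (lower bound direction)
  have AGG_down : ∀ e : ℝ, (∀ (j : Fin N) (k : Fin L),
        (μ {ω | y j ω = k ∧ 0 ≤ ∑ i, v i * ((if Z i j ω = k.succ then (1 : ℝ) else 0)
          - if Z i j ω = (hfun k).succ then 1 else 0)}).toReal ≤ pri k * Real.exp e) →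
      1 - Real.exp e ≤ (N : ℝ)⁻¹ * ∑ j, (μ {ω | yhat j ω ≠ y j ω}).toReal := by
    intro e he
    have hj : ∀ j, 1 - Real.exp e ≤ (μ {ω | yhat j ω ≠ y j ω}).toReal := by
      intro j
      set E : Fin L → Set Ω := fun k =>
        {ω | y j ω = k ∧ 0 ≤ ∑ i, v i * ((if Z i j ω = k.succ then (1 : ℝ) else 0)
          - if Z i j ω = (hfun k).succ then 1 else 0)} with hE_def
      have hms : MeasurableSet {ω | yhat j ω = y j ω} := by
        have hseteq : {ω | yhat j ω = y j ω}
            = ⋃ k : Fin L, ((yhat j) ⁻¹' {k} ∩ (y j) ⁻¹' {k}) := by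
          ext ω
          simp only [Set.mem_setOf_eq, Set.mem_iUnion, Set.mem_inter_iff,
            Set.mem_preimage, Set.mem_singleton_iff]
          constructor
          · intro h; exact ⟨y j ω, h, rfl⟩
          · rintro ⟨k, h1, h2⟩; rw [h1, h2]
        rw [hseteq]
        exact MeasurableSet.iUnion fun k =>
          ((hyhatm j) (measurableSet_singleton k)).inter ((hym j) (measurableSet_singleton k))
      have hcompl : {ω | yhat j ω ≠ y j ω} = {ω | yhat j ω = y j ω}ᶜ := rfl
      have hmeascompl : μ {ω | yhat j ω ≠ y j ω} = 1 - μ {ω | yhat j ω = y j ω} := by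
        rw [hcompl, measure_compl hms (measure_ne_top μ _), measure_univ]
      have htoReal : (μ {ω | yhat j ω ≠ y j ω}).toReal
          = 1 - (μ {ω | yhat j ω = y j ω}).toReal := by
        rw [hmeascompl, ENNReal.toReal_sub_of_le prob_le_one ENNReal.one_ne_top,
          ENNReal.toReal_one]
      have hsub : {ω | yhat j ω = y j ω} ⊆ ⋃ k ∈ (Finset.univ : Finset (Fin L)), E k := by
        intro ω hω
        simp only [Set.mem_iUnion, exists_prop]
        refine ⟨y j ω, Finset.mem_univ _, rfl, ?_⟩
        have h1 := sub_nonneg.2 (hyhat j ω (hfun (y j ω)))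
        rw [← Finset.sum_sub_distrib] at h1
        have hyy : yhat j ω = y j ω := hω
        rw [hyy] at h1
        calc (0:ℝ) ≤ _ := h1
        _ = _ := Finset.sum_congr rfl fun i _ => by ring
      have h1 : μ {ω | yhat j ω = y j ω} ≤ ∑ k, μ (E k) :=
        (measure_mono hsub).trans (measure_biUnion_finset_le _ _)
      have h2 : (μ {ω | yhat j ω = y j ω}).toReal ≤ ∑ k, (μ (E k)).toReal := by
        have h3 := ENNReal.toReal_mono
          (ENNReal.sum_lt_top.2 fun k _ => measure_lt_top μ _).ne h1
        rwa [ENNReal.toReal_sum (fun k _ => measure_ne_top μ _)] at h3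
      have h4 : (μ {ω | yhat j ω = y j ω}).toReal ≤ Real.exp e := by
        refine h2.trans ?_
        calc ∑ k, (μ (E k)).toReal ≤ ∑ k, pri k * Real.exp e :=
              Finset.sum_le_sum fun k _ => he j k
        _ = (∑ k, pri k) * Real.exp e := by rw [Finset.sum_mul]
        _ = Real.exp e := by rw [hpri_sum, one_mul]
      rw [htoReal]
      linarith
    have hNpos : (0 : ℝ) < (N : ℝ) := by exact_mod_cast hN
    have hsumj : (N : ℝ) * (1 - Real.exp e)
        ≤ ∑ j, (μ {ω | yhat j ω ≠ y j ω}).toReal := by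
      calc (N : ℝ) * (1 - Real.exp e)
          = ∑ _j : Fin N, (1 - Real.exp e) := by
            rw [Finset.sum_const, Finset.card_univ, Fintype.card_fin, nsmul_eq_mul]
      _ ≤ ∑ j, (μ {ω | yhat j ω ≠ y j ω}).toReal := Finset.sum_le_sum fun j _ => hj j
    calc 1 - Real.exp e = (N : ℝ)⁻¹ * ((N : ℝ) * (1 - Real.exp e)) := by field_simp
    _ ≤ (N : ℝ)⁻¹ * ∑ j, (μ {ω | yhat j ω ≠ y j ω}).toReal :=
        mul_le_mul_of_nonneg_left hsumj (by positivity)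
  constructor
  · -- upper bound, t ≥ 0
    intro ht0
    have bound_H : ∀ (j : Fin N) (k h' : Fin L), h' ≠ k →
        (μ {ω | y j ω = k ∧ 0 ≤ ∑ i, v i * ((if Z i j ω = h'.succ then (1 : ℝ) else 0)
          - if Z i j ω = k.succ then 1 else 0)}).toReal
          ≤ pri k * Real.exp (-t ^ 2 / 2) := by
      intro j k h' hne
      set lam := t / D with hlam_def
      have hlam : 0 ≤ lam := div_nonneg ht0 hD.le
      set φ : Fin M → ℝ := fun i =>
        (bb i - aa i) * (lam * v i) + (lam * v i) ^ 2 / 2 with hφ_def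
      have hφ : ∀ i, 1 + CrowdHom.condLaw q w i k k.succ * (Real.exp (-(lam * v i)) - 1)
          + CrowdHom.condLaw q w i k h'.succ * (Real.exp (lam * v i) - 1)
          ≤ Real.exp (φ i) := by
        intro i
        rw [hp_at_k k i, hp_at_h k h' i hne]
        simp only [hφ_def]
        exact AuxWMV.mgf_H (lam * v i) (haa i) (hbb i) (hab1 i)
      have hEV := EV j k k h' (Ne.symm hne) lam hlam φ hφ
      refine hEV.trans (mul_le_mul_of_nonneg_left ?_ (hpri k))
      apply Real.exp_le_exp.2
      have hsplit : ∑ i, φ i = lam * ∑ i, (bb i - aa i) * v i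
          + lam ^ 2 / 2 * ∑ i, v i ^ 2 := by
        simp only [hφ_def]
        rw [Finset.mul_sum, Finset.mul_sum, ← Finset.sum_add_distrib]
        exact Finset.sum_congr rfl fun i _ => by ring
      rw [hsplit, hsum_ba, ← hD2, hlam_def]
      apply le_of_eq
      field_simp [hD.ne']
      ring
    have bound_B : ∀ (j : Fin N) (k h' : Fin L), h' ≠ k →
        (μ {ω | y j ω = k ∧ 0 ≤ ∑ i, v i * ((if Z i j ω = h'.succ then (1 : ℝ) else 0)
          - if Z i j ω = k.succ then 1 else 0)}).toReal
          ≤ pri k * Real.exp (-t ^ 2 / (2 * (q + c * t / 3))) := by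
      intro j k h' hne
      set A := q + c * t / 3 with hA_def
      have hA : 0 < A := by
        have h0 : 0 ≤ c * t / 3 := div_nonneg (mul_nonneg hc0 ht0) (by norm_num)
        rw [hA_def]; linarith
      set lam := t / (D * A) with hlam_def
      have hlam : 0 ≤ lam := div_nonneg ht0 (mul_pos hD hA).le
      have hue : lam * binf = c * t / A := by
        rw [hlam_def, hbD]; field_simp
      have hu3 : lam * binf < 3 := by
        rw [hue, div_lt_iff₀ hA, hA_def]
        linarith
      have hq_eq : q = A - c * t / 3 := by rw [hA_def]; ring
      have h13 : 1 - lam * binf / 3 = q / A := by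
        rw [hue, hq_eq]
        field_simp [hA.ne']
        try ring
        try (left; first | trivial | ring)
        try trivial
      have hK0 : 0 ≤ (2 * (1 - lam * binf / 3))⁻¹ := by
        rw [h13]
        exact inv_nonneg.2 (mul_nonneg (by norm_num) (div_nonneg hq0.le hA.le))
      set K := (2 * (1 - lam * binf / 3))⁻¹ with hK_def
      set φ : Fin M → ℝ := fun i =>
        (bb i - aa i) * (lam * v i) + (aa i + bb i) * ((lam * v i) ^ 2 * K) with hφ_def
      have hφ : ∀ i, 1 + CrowdHom.condLaw q w i k k.succ * (Real.exp (-(lam * v i)) - 1)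
          + CrowdHom.condLaw q w i k h'.succ * (Real.exp (lam * v i) - 1)
          ≤ Real.exp (φ i) := by
        intro i
        rw [hp_at_k k i, hp_at_h k h' i hne]
        simp only [hφ_def]
        have hsu : |lam * v i| ≤ lam * binf := by
          rw [abs_mul, abs_of_nonneg hlam]
          exact mul_le_mul_of_nonneg_left (hbinf_le i) hlam
        exact AuxWMV.mgf_B (haa i) (hbb i) (hab1 i) hsu hu3
      have hEV := EV j k k h' (Ne.symm hne) lam hlam φ hφ
      refine hEV.trans (mul_le_mul_of_nonneg_left ?_ (hpri k))
      apply Real.exp_le_exp.2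
      have hstep : ∑ i, φ i ≤ lam * (-(t * D)) + q * K * (lam ^ 2 * D ^ 2) := by
        have hterm : ∀ i, φ i ≤ (bb i - aa i) * (lam * v i) + q * ((lam * v i) ^ 2 * K) := by
          intro i
          simp only [hφ_def]
          apply add_le_add_right
          exact mul_le_mul_of_nonneg_right (hab_q i) (mul_nonneg (sq_nonneg _) hK0)
        calc ∑ i, φ i ≤ ∑ i, ((bb i - aa i) * (lam * v i) + q * ((lam * v i) ^ 2 * K)) :=
              Finset.sum_le_sum fun i _ => hterm i
        _ = lam * ∑ i, (bb i - aa i) * v i + q * K * (lam ^ 2 * ∑ i, v i ^ 2) := by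
              rw [Finset.sum_add_distrib, Finset.mul_sum, Finset.mul_sum, Finset.mul_sum]
              congr 1
              · exact Finset.sum_congr rfl fun i _ => by ring
              · exact Finset.sum_congr rfl fun i _ => by ring
        _ = lam * (-(t * D)) + q * K * (lam ^ 2 * D ^ 2) := by rw [hsum_ba, hD2]
      refine hstep.trans ?_
      have hfinal : lam * (-(t * D)) + q * K * (lam ^ 2 * D ^ 2)
          = -t ^ 2 / (2 * A) := by
        rw [hK_def, h13, hlam_def]
        field_simp [hD.ne', hA.ne', hq0.ne']
        ring
      rw [hfinal, hA_def]
    have h1 := AGG_up (-t ^ 2 / 2) bound_H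
    have h2 := AGG_up (-t ^ 2 / (2 * (q + c * t / 3))) bound_B
    have hmin := le_min h1 h2
    rwa [← mul_min_of_nonneg _ _ (by linarith : (0:ℝ) ≤ (L : ℝ) - 1)] at hmin
  · -- lower bound, t ≤ 0
    intro ht0
    have bound_H : ∀ (j : Fin N) (k : Fin L),
        (μ {ω | y j ω = k ∧ 0 ≤ ∑ i, v i * ((if Z i j ω = k.succ then (1 : ℝ) else 0)
          - if Z i j ω = (hfun k).succ then 1 else 0)}).toReal
          ≤ pri k * Real.exp (-t ^ 2 / 2) := by
      intro j k
      set lam := -t / D with hlam_def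
      have hlam : 0 ≤ lam := div_nonneg (by linarith) hD.le
      set φ : Fin M → ℝ := fun i =>
        (aa i - bb i) * (lam * v i) + (lam * v i) ^ 2 / 2 with hφ_def
      have hφ : ∀ i, 1 + CrowdHom.condLaw q w i k (hfun k).succ * (Real.exp (-(lam * v i)) - 1)
          + CrowdHom.condLaw q w i k k.succ * (Real.exp (lam * v i) - 1)
          ≤ Real.exp (φ i) := by
        intro i
        rw [hp_at_k k i, hp_at_h k (hfun k) i (hfun_ne k)]
        simp only [hφ_def]
        exact AuxWMV.mgf_H (lam * v i) (hbb i) (haa i) (by linarith [hab1 i])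
      have hEV := EV j k (hfun k) k (hfun_ne k) lam hlam φ hφ
      refine hEV.trans (mul_le_mul_of_nonneg_left ?_ (hpri k))
      apply Real.exp_le_exp.2
      have hsplit : ∑ i, φ i = lam * ∑ i, (aa i - bb i) * v i
          + lam ^ 2 / 2 * ∑ i, v i ^ 2 := by
        simp only [hφ_def]
        rw [Finset.mul_sum, Finset.mul_sum, ← Finset.sum_add_distrib]
        exact Finset.sum_congr rfl fun i _ => by ring
      rw [hsplit, hsum_ab, ← hD2, hlam_def]
      apply le_of_eq
      field_simp [hD.ne']
      ring
    have bound_B : ∀ (j : Fin N) (k : Fin L),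
        (μ {ω | y j ω = k ∧ 0 ≤ ∑ i, v i * ((if Z i j ω = k.succ then (1 : ℝ) else 0)
          - if Z i j ω = (hfun k).succ then 1 else 0)}).toReal
          ≤ pri k * Real.exp (-t ^ 2 / (2 * (q - c * t / 3))) := by
      intro j k
      set A := q - c * t / 3 with hA_def
      have hA : 0 < A := by
        have h0 : 0 ≤ c * (-t) / 3 := div_nonneg (mul_nonneg hc0 (by linarith)) (by norm_num)
        rw [hA_def]; nlinarith
      set lam := -t / (D * A) with hlam_def
      have hlam : 0 ≤ lam := div_nonneg (by linarith) (mul_pos hD hA).le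
      have hue : lam * binf = c * (-t) / A := by
        rw [hlam_def, hbD]; field_simp
      have hu3 : lam * binf < 3 := by
        rw [hue, div_lt_iff₀ hA, hA_def]
        linarith
      have hq_eq : q = A + c * t / 3 := by rw [hA_def]; ring
      have h13 : 1 - lam * binf / 3 = q / A := by
        rw [hue, hq_eq]
        field_simp [hA.ne']
        try ring
        try (left; first | trivial | ring)
        try trivial
      have hK0 : 0 ≤ (2 * (1 - lam * binf / 3))⁻¹ := by
        rw [h13]
        exact inv_nonneg.2 (mul_nonneg (by norm_num) (div_nonneg hq0.le hA.le))
      set K := (2 * (1 - lam * binf / 3))⁻¹ with hK_def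
      set φ : Fin M → ℝ := fun i =>
        (aa i - bb i) * (lam * v i) + (bb i + aa i) * ((lam * v i) ^ 2 * K) with hφ_def
      have hφ : ∀ i, 1 + CrowdHom.condLaw q w i k (hfun k).succ * (Real.exp (-(lam * v i)) - 1)
          + CrowdHom.condLaw q w i k k.succ * (Real.exp (lam * v i) - 1)
          ≤ Real.exp (φ i) := by
        intro i
        rw [hp_at_k k i, hp_at_h k (hfun k) i (hfun_ne k)]
        simp only [hφ_def]
        have hsu : |lam * v i| ≤ lam * binf := by
          rw [abs_mul, abs_of_nonneg hlam]
          exact mul_le_mul_of_nonneg_left (hbinf_le i) hlam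
        exact AuxWMV.mgf_B (hbb i) (haa i) (by linarith [hab1 i]) hsu hu3
      have hEV := EV j k (hfun k) k (hfun_ne k) lam hlam φ hφ
      refine hEV.trans (mul_le_mul_of_nonneg_left ?_ (hpri k))
      apply Real.exp_le_exp.2
      have hstep : ∑ i, φ i ≤ lam * (t * D) + q * K * (lam ^ 2 * D ^ 2) := by
        have hterm : ∀ i, φ i ≤ (aa i - bb i) * (lam * v i) + q * ((lam * v i) ^ 2 * K) := by
          intro i
          simp only [hφ_def]
          apply add_le_add_right
          refine mul_le_mul_of_nonneg_right ?_ (mul_nonneg (sq_nonneg _) hK0)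
          linarith [hab_q i]
        calc ∑ i, φ i ≤ ∑ i, ((aa i - bb i) * (lam * v i) + q * ((lam * v i) ^ 2 * K)) :=
              Finset.sum_le_sum fun i _ => hterm i
        _ = lam * ∑ i, (aa i - bb i) * v i + q * K * (lam ^ 2 * ∑ i, v i ^ 2) := by
              rw [Finset.sum_add_distrib, Finset.mul_sum, Finset.mul_sum, Finset.mul_sum]
              congr 1
              · exact Finset.sum_congr rfl fun i _ => by ring
              · exact Finset.sum_congr rfl fun i _ => by ring
        _ = lam * (t * D) + q * K * (lam ^ 2 * D ^ 2) := by rw [hsum_ab, hD2]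
      refine hstep.trans ?_
      have hfinal : lam * (t * D) + q * K * (lam ^ 2 * D ^ 2)
          = -t ^ 2 / (2 * A) := by
        rw [hK_def, h13, hlam_def]
        field_simp [hD.ne', hA.ne', hq0.ne']
        ring
      rw [hfinal, hA_def]
    have h1 := AGG_down (-t ^ 2 / 2) bound_H
    have h2 := AGG_down (-t ^ 2 / (2 * (q - c * t / 3))) bound_B
    rcases le_total (Real.exp (-t ^ 2 / 2)) (Real.exp (-t ^ 2 / (2 * (q - c * t / 3)))) with h | h
    · rwa [min_eq_left h]
    · rwa [min_eq_right h]

end MainProof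
end
end

section
/- Under the homogeneous Dawid–Skene model with constant assignment probability q and majority voting: if w̄ = (1/M)·Σ_{i=1}^M w_i > 1/L, then E[E_N] ≤ (L−1)·exp(−(1/2)·(L/(L−1))²·M·q²·(w̄ − 1/L)²), and also E[E_N] ≤ (L−1)·exp( −[(1/2)·(L/(L−1))²·M·q·(w̄ − 1/L)²] / [1 + (L/(3(L−1)))·(w̄ − 1/L)] ). -/
open MeasureTheory ProbabilityTheory Real

noncomputable section

/-- Key analytic lemma: optimal Chernoff exponent bound. -/
lemma key_lambda (P R S : ℝ) (hR : 0 ≤ R) (hPR : R < P) (hS : P + R ≤ S) (hS0 : 0 < S) :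
    ∃ lam : ℝ, 0 ≤ lam ∧
      P * (Real.exp (-lam) - 1) + R * (Real.exp lam - 1) ≤ -(P - R) ^ 2 / (2 * S) := by
  have hP : 0 < P := lt_of_le_of_lt hR hPR
  rcases eq_or_lt_of_le hR with hR0 | hR0
  · refine ⟨Real.log 2, Real.log_nonneg (by norm_num), ?_⟩
    rw [← hR0, Real.exp_neg, Real.exp_log (by norm_num)]
    have hPS : P ≤ S := by linarith
    rw [le_div_iff₀ (by positivity : (0:ℝ) < 2 * S)]
    nlinarith [sq_nonneg (P - S)]
  · refine ⟨Real.log (Real.sqrt (P / R)), Real.log_nonneg ?_, ?_⟩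
    · rw [show (1:ℝ) = Real.sqrt 1 from (Real.sqrt_one).symm]
      apply Real.sqrt_le_sqrt
      rw [le_div_iff₀ hR0]; linarith
    · have hs : Real.sqrt (P / R) = Real.sqrt P / Real.sqrt R := Real.sqrt_div' _ hR ▸ by
        rw [Real.sqrt_div hP.le]
      have hsP : 0 < Real.sqrt P := Real.sqrt_pos.2 hP
      have hsR : 0 < Real.sqrt R := Real.sqrt_pos.2 hR0
      rw [Real.exp_log (by rw [hs]; positivity), Real.exp_neg, Real.exp_log (by rw [hs]; positivity), hs]
      have h1 : P * (Real.sqrt R / Real.sqrt P) = Real.sqrt P * Real.sqrt R := by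
        field_simp; nlinarith [Real.sq_sqrt hP.le]
      have h2 : R * (Real.sqrt P / Real.sqrt R) = Real.sqrt P * Real.sqrt R := by
        field_simp; nlinarith [Real.sq_sqrt hR0.le]
      have hP2 : Real.sqrt P ^ 2 = P := Real.sq_sqrt hP.le
      have hR2 : Real.sqrt R ^ 2 = R := Real.sq_sqrt hR0.le
      have hamgm : 2 * (Real.sqrt P * Real.sqrt R) ≤ P + R := by
        nlinarith [sq_nonneg (Real.sqrt P - Real.sqrt R)]
      rw [inv_div, le_div_iff₀ (by positivity : (0:ℝ) < 2 * S)]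
      have hinv : P * (Real.sqrt R / Real.sqrt P) - P + (R * (Real.sqrt P / Real.sqrt R) - R)
          = -(Real.sqrt P - Real.sqrt R)^2 := by rw [h1, h2]; nlinarith
      have hfac : (P - R)^2 = (Real.sqrt P - Real.sqrt R)^2 * (Real.sqrt P + Real.sqrt R)^2 := by
        nlinarith
      have hub : (Real.sqrt P + Real.sqrt R)^2 ≤ 2 * S := by nlinarith
      nlinarith [sq_nonneg (Real.sqrt P - Real.sqrt R), sq_nonneg (Real.sqrt P + Real.sqrt R)]


lemma condLaw_nonneg {M L : ℕ} (hL : 2 ≤ L) {q : ℝ} (hq0 : 0 < q) (hq1 : q ≤ 1)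
    {w : Fin M → ℝ} (hw0 : ∀ i, 0 ≤ w i) (hw1 : ∀ i, w i ≤ 1)
    (i : Fin M) (k : Fin L) (a : Fin (L + 1)) : 0 ≤ CrowdHom.condLaw q w i k a := by
  have hL1 : (0:ℝ) < (L:ℝ) - 1 := by
    have : (2:ℝ) ≤ (L:ℝ) := by exact_mod_cast hL
    linarith
  unfold CrowdHom.condLaw
  split
  · linarith
  · split
    · exact mul_nonneg hq0.le (hw0 i)
    · exact mul_nonneg hq0.le (div_nonneg (by linarith [hw1 i]) hL1.le)

lemma mgf_eval {M L : ℕ} (hL : 2 ≤ L) (q : ℝ) (w : Fin M → ℝ) (i : Fin M)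
    (k g : Fin L) (hgk : g ≠ k) (lam : ℝ) :
    ∑ a : Fin (L + 1), CrowdHom.condLaw q w i k a *
        Real.exp (lam * ((if a = g.succ then (1:ℝ) else 0) - if a = k.succ then (1:ℝ) else 0))
      = 1 + q * w i * (Real.exp (-lam) - 1)
          + q * ((1 - w i) / ((L : ℝ) - 1)) * (Real.exp lam - 1) := by
  have hL1 : ((L:ℝ) - 1) ≠ 0 := by
    have : (2:ℝ) ≤ (L:ℝ) := by exact_mod_cast hL
    linarith
  rw [Fin.sum_univ_succ]
  have h0 : CrowdHom.condLaw q w i k (0 : Fin (L+1)) *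
      Real.exp (lam * ((if (0 : Fin (L+1)) = g.succ then (1:ℝ) else 0)
        - if (0 : Fin (L+1)) = k.succ then (1:ℝ) else 0)) = 1 - q := by
    rw [if_neg (Fin.succ_ne_zero g).symm, if_neg (Fin.succ_ne_zero k).symm]
    simp [CrowdHom.condLaw]
  rw [h0]
  have hsucc : ∀ b : Fin L, CrowdHom.condLaw q w i k b.succ *
      Real.exp (lam * ((if b.succ = g.succ then (1:ℝ) else 0)
        - if b.succ = k.succ then (1:ℝ) else 0))
      = (q * (if b = k then w i else (1 - w i) / ((L : ℝ) - 1))) *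
        Real.exp (lam * ((if b = g then (1:ℝ) else 0) - if b = k then (1:ℝ) else 0)) := by
    intro b
    have hb : (b.succ : Fin (L+1)) ≠ 0 := Fin.succ_ne_zero b
    rw [CrowdHom.condLaw, dif_neg hb]
    simp [Fin.pred_succ, Fin.succ_inj]
  simp only [hsucc]
  set f : Fin L → ℝ := fun b => (q * (if b = k then w i else (1 - w i) / ((L : ℝ) - 1))) *
        Real.exp (lam * ((if b = g then (1:ℝ) else 0) - if b = k then (1:ℝ) else 0)) with hf
  have hk : f k = q * w i * Real.exp (-lam) := by
    simp [hf, Ne.symm hgk]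
  have hg : f g = q * ((1 - w i) / ((L : ℝ) - 1)) * Real.exp lam := by
    simp [hf, hgk]
  have hother : ∀ b ∈ (Finset.univ.erase k).erase g, f b = q * ((1 - w i) / ((L : ℝ) - 1)) := by
    intro b hb
    have hbg : b ≠ g := (Finset.mem_erase.1 hb).1
    have hbk : b ≠ k := (Finset.mem_erase.1 ((Finset.mem_erase.1 hb).2)).1
    simp only [hf, if_neg hbk, if_neg hbg]
    simp
  have hmemk : k ∈ (Finset.univ : Finset (Fin L)) := Finset.mem_univ k
  have hmemg : g ∈ Finset.univ.erase k := Finset.mem_erase.2 ⟨hgk, Finset.mem_univ g⟩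
  rw [← Finset.add_sum_erase _ f hmemk, ← Finset.add_sum_erase _ f hmemg,
    Finset.sum_congr rfl hother, Finset.sum_const, hk, hg]
  have hcard : ((Finset.univ.erase k).erase g).card = L - 2 := by
    rw [Finset.card_erase_of_mem hmemg, Finset.card_erase_of_mem hmemk, Finset.card_univ,
      Fintype.card_fin]
    omega
  rw [hcard]
  have hcast : ((L - 2 : ℕ) : ℝ) = (L : ℝ) - 2 := by
    have : (2:ℕ) ≤ L := hL
    push_cast [Nat.cast_sub this]
    ring
  rw [nsmul_eq_mul, hcast]
  field_simp
  ring

set_option maxHeartbeats 1000000 in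
/-- Under the homogeneous Dawid–Skene model with constant assignment
probability `q` and majority voting: if `w̄ > 1/L` then
`E[E_N] ≤ (L−1)·exp(−(1/2)(L/(L−1))² M q² (w̄−1/L)²)` and also
`E[E_N] ≤ (L−1)·exp(−[(1/2)(L/(L−1))² M q (w̄−1/L)²]/[1 + (L/(3(L−1)))(w̄−1/L)])`. -/
theorem mv_mean_error_rate_bounds
    {Ω : Type*} [MeasurableSpace Ω] (μ : Measure Ω) [IsProbabilityMeasure μ]
    {M N L : ℕ} (hM : 0 < M) (hN : 0 < N) (hL : 2 ≤ L)
    (y : Fin N → Ω → Fin L) (Z : Fin M → Fin N → Ω → Fin (L + 1))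
    (hym : ∀ j, Measurable (y j)) (hZm : ∀ i j, Measurable (Z i j))
    (pri : Fin L → ℝ) (q : ℝ) (w : Fin M → ℝ)
    (hpri : ∀ k, 0 ≤ pri k) (hq0 : 0 < q) (hq1 : q ≤ 1)
    (hw0 : ∀ i, 0 ≤ w i) (hw1 : ∀ i, w i ≤ 1)
    (hprior : ∀ (j : Fin N) (k : Fin L), (μ {ω | y j ω = k}).toReal = pri k)
    (hlaw : ∀ (j : Fin N) (k : Fin L) (h : Fin M → Fin (L + 1)),
      (μ {ω | y j ω = k ∧ ∀ i, Z i j ω = h i}).toReal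
        = pri k * ∏ i, CrowdHom.condLaw q w i k (h i))
    (hindep : iIndepFun (fun j ω => (y j ω, fun i => Z i j ω)) μ)
    (yhat : Fin N → Ω → Fin L) (hyhatm : ∀ j, Measurable (yhat j))
    (hyhat : ∀ (j : Fin N) (ω : Ω) (k : Fin L),
      (∑ i, if Z i j ω = k.succ then (1 : ℝ) else 0)
        ≤ ∑ i, if Z i j ω = (yhat j ω).succ then (1 : ℝ) else 0)
    (hwbar : 1 / (L : ℝ) < (M : ℝ)⁻¹ * ∑ i, w i) :
    ((N : ℝ)⁻¹ * ∑ j, (μ {ω | yhat j ω ≠ y j ω}).toReal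
      ≤ ((L : ℝ) - 1) * Real.exp (-(1 / 2) * ((L : ℝ) / ((L : ℝ) - 1)) ^ 2 * (M : ℝ)
          * q ^ 2 * ((M : ℝ)⁻¹ * ∑ i, w i - 1 / (L : ℝ)) ^ 2))
    ∧ ((N : ℝ)⁻¹ * ∑ j, (μ {ω | yhat j ω ≠ y j ω}).toReal
      ≤ ((L : ℝ) - 1) * Real.exp (-((1 / 2) * ((L : ℝ) / ((L : ℝ) - 1)) ^ 2 * (M : ℝ)
          * q * ((M : ℝ)⁻¹ * ∑ i, w i - 1 / (L : ℝ)) ^ 2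
          / (1 + (L : ℝ) / (3 * ((L : ℝ) - 1)) * ((M : ℝ)⁻¹ * ∑ i, w i - 1 / (L : ℝ)))))) := by
  classical
  have hLR : (2:ℝ) ≤ (L:ℝ) := by exact_mod_cast hL
  have hL1 : (0:ℝ) < (L:ℝ) - 1 := by linarith
  have hM0 : (0:ℝ) < (M:ℝ) := by exact_mod_cast hM
  have hN0 : (0:ℝ) < (N:ℝ) := by exact_mod_cast hN
  set W : ℝ := ∑ i, w i with hWdef
  set δ : ℝ := (M : ℝ)⁻¹ * W - 1 / (L : ℝ) with hδdef
  have hδ0 : 0 < δ := by simp only [hδdef]; linarith [hwbar]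
  set P : ℝ := q * W with hPdef
  set R : ℝ := q * ((M:ℝ) - W) / ((L:ℝ) - 1) with hRdef
  have hW0 : 0 ≤ W := Finset.sum_nonneg fun i _ => hw0 i
  have hWM : W ≤ (M:ℝ) := by
    calc W ≤ ∑ _i : Fin M, (1:ℝ) := Finset.sum_le_sum fun i _ => hw1 i
    _ = (M:ℝ) := by simp
  have hR0 : 0 ≤ R := by
    rw [hRdef]; apply div_nonneg (mul_nonneg hq0.le (by linarith)) hL1.le
  have hPRval : P - R = q * (L:ℝ) * (M:ℝ) * δ / ((L:ℝ) - 1) := by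
    rw [hPdef, hRdef, hδdef]
    field_simp
    ring
  have hPR : R < P := by
    rw [← sub_pos, hPRval]; positivity
  have hPRS : P + R ≤ (M:ℝ) * q := by
    rw [hPdef, hRdef]
    have h1 : (0:ℝ) ≤ (M:ℝ) - W := by linarith
    have h2 : ((M:ℝ) - W) / ((L:ℝ) - 1) ≤ (M:ℝ) - W := by
      apply div_le_self h1 (by linarith)
    have h3 : q * ((M:ℝ) - W) / ((L:ℝ) - 1) = q * (((M:ℝ) - W) / ((L:ℝ) - 1)) := by ring
    rw [h3]
    nlinarith
  obtain ⟨lam, hlam0, hkey⟩ :=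
    key_lambda P R ((M:ℝ) * q) hR0 hPR hPRS (by positivity)
  set K : ℝ := Real.exp (-(P - R) ^ 2 / (2 * ((M:ℝ) * q))) with hKdef
  have hK0 : 0 ≤ K := (Real.exp_pos _).le
  -- the per (j,k,g) Chernoff bound
  have main : ∀ (j : Fin N) (k g : Fin L), g ≠ k →
      (μ {ω | y j ω = k ∧ (∑ i, if Z i j ω = k.succ then (1:ℝ) else 0)
          ≤ ∑ i, if Z i j ω = g.succ then (1:ℝ) else 0}).toReal ≤ pri k * K := by
    intro j k g hgk
    set X : Fin (L+1) → ℝ :=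
      fun a => (if a = g.succ then (1:ℝ) else 0) - (if a = k.succ then (1:ℝ) else 0) with hXdef
    set cnt : Fin L → (Fin M → Fin (L+1)) → ℝ :=
      fun c h => ∑ i, if h i = c.succ then (1:ℝ) else 0 with hcnt
    set S : Finset (Fin M → Fin (L+1)) :=
      Finset.univ.filter (fun h => cnt k h ≤ cnt g h) with hSdef
    set atom : (Fin M → Fin (L+1)) → Set Ω :=
      fun h => {ω | y j ω = k ∧ ∀ i, Z i j ω = h i} with hatom
    have hmeas : ∀ h, MeasurableSet (atom h) := by
      intro h
      have : atom h = (y j ⁻¹' {k}) ∩ ⋂ i, Z i j ⁻¹' {h i} := by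
        ext ω
        simp [hatom, Set.mem_iInter]
      rw [this]
      exact ((hym j) (measurableSet_singleton k)).inter
        (MeasurableSet.iInter fun i => (hZm i j) (measurableSet_singleton (h i)))
    have hA : {ω | y j ω = k ∧ (∑ i, if Z i j ω = k.succ then (1:ℝ) else 0)
          ≤ ∑ i, if Z i j ω = g.succ then (1:ℝ) else 0} = ⋃ h ∈ S, atom h := by
      ext ω
      simp only [Set.mem_setOf_eq, Set.mem_iUnion, hatom, hSdef, Finset.mem_filter,
        Finset.mem_univ, true_and]
      constructor
      · rintro ⟨hy, hc⟩
        exact ⟨fun i => Z i j ω, hc, hy, fun i => rfl⟩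
      · rintro ⟨h, hc, hy, hz⟩
        refine ⟨hy, ?_⟩
        simp only [hcnt] at hc
        simpa only [hz] using hc
    have hdisj : (↑S : Set (Fin M → Fin (L+1))).PairwiseDisjoint atom := by
      intro h1 _ h2 _ hne
      rw [Function.onFun, Set.disjoint_left]
      rintro ω ⟨_, hz1⟩ ⟨_, hz2⟩
      exact hne (funext fun i => (hz1 i).symm.trans (hz2 i))
    have hstep2 : (μ {ω | y j ω = k ∧ (∑ i, if Z i j ω = k.succ then (1:ℝ) else 0)
          ≤ ∑ i, if Z i j ω = g.succ then (1:ℝ) else 0}).toReal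
        = pri k * ∑ h ∈ S, ∏ i, CrowdHom.condLaw q w i k (h i) := by
      rw [hA, measure_biUnion_finset hdisj fun h _ => hmeas h,
        ENNReal.toReal_sum fun h _ => measure_ne_top μ _, Finset.mul_sum]
      exact Finset.sum_congr rfl fun h _ => hlaw j k h
    rw [hstep2]
    apply mul_le_mul_of_nonneg_left _ (hpri k)
    -- Chernoff
    have hcl0 : ∀ (i : Fin M) (a : Fin (L+1)), 0 ≤ CrowdHom.condLaw q w i k a :=
      fun i a => condLaw_nonneg hL hq0 hq1 hw0 hw1 i k a
    have step3 : ∑ h ∈ S, ∏ i, CrowdHom.condLaw q w i k (h i)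
        ≤ ∑ h : Fin M → Fin (L+1), ∏ i,
            (CrowdHom.condLaw q w i k (h i) * Real.exp (lam * X (h i))) := by
      have h1 : ∀ h ∈ S, ∏ i, CrowdHom.condLaw q w i k (h i)
          ≤ ∏ i, (CrowdHom.condLaw q w i k (h i) * Real.exp (lam * X (h i))) := by
        intro h hS
        rw [Finset.prod_mul_distrib, ← Real.exp_sum, ← Finset.mul_sum]
        apply le_mul_of_one_le_right (Finset.prod_nonneg fun i _ => hcl0 i (h i))
        apply Real.one_le_exp
        apply mul_nonneg hlam0
        have hc : cnt k h ≤ cnt g h := (Finset.mem_filter.1 hS).2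
        simp only [hcnt] at hc
        simp only [hXdef, Finset.sum_sub_distrib]
        linarith
      calc ∑ h ∈ S, ∏ i, CrowdHom.condLaw q w i k (h i)
          ≤ ∑ h ∈ S, ∏ i, (CrowdHom.condLaw q w i k (h i) * Real.exp (lam * X (h i))) :=
            Finset.sum_le_sum h1
        _ ≤ ∑ h : Fin M → Fin (L+1), ∏ i,
              (CrowdHom.condLaw q w i k (h i) * Real.exp (lam * X (h i))) := by
            apply Finset.sum_le_sum_of_subset_of_nonneg (Finset.filter_subset _ _)
            intro h _ _
            exact Finset.prod_nonneg fun i _ =>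
              mul_nonneg (hcl0 i (h i)) (Real.exp_pos _).le
    have step4 : ∑ h : Fin M → Fin (L+1), ∏ i,
          (CrowdHom.condLaw q w i k (h i) * Real.exp (lam * X (h i)))
        = ∏ i, ∑ a : Fin (L+1), (CrowdHom.condLaw q w i k a * Real.exp (lam * X a)) := by
      rw [Finset.prod_univ_sum (fun _ => Finset.univ)
        (fun i a => CrowdHom.condLaw q w i k a * Real.exp (lam * X a)),
        Fintype.piFinset_univ]
    have step5 : ∏ i, ∑ a : Fin (L+1), (CrowdHom.condLaw q w i k a * Real.exp (lam * X a))
        ≤ Real.exp (P * (Real.exp (-lam) - 1) + R * (Real.exp lam - 1)) := by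
      have hval : ∀ i : Fin M, ∑ a : Fin (L+1),
          (CrowdHom.condLaw q w i k a * Real.exp (lam * X a))
          = 1 + q * w i * (Real.exp (-lam) - 1)
              + q * ((1 - w i) / ((L : ℝ) - 1)) * (Real.exp lam - 1) := by
        intro i; exact mgf_eval hL q w i k g hgk lam
      have hfac0 : ∀ i : Fin M, (0:ℝ) ≤ ∑ a : Fin (L+1),
          (CrowdHom.condLaw q w i k a * Real.exp (lam * X a)) :=
        fun i => Finset.sum_nonneg fun a _ => mul_nonneg (hcl0 i a) (Real.exp_pos _).le
      calc ∏ i, ∑ a : Fin (L+1), (CrowdHom.condLaw q w i k a * Real.exp (lam * X a))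
          ≤ ∏ i, Real.exp (q * w i * (Real.exp (-lam) - 1)
              + q * ((1 - w i) / ((L : ℝ) - 1)) * (Real.exp lam - 1)) := by
            apply Finset.prod_le_prod (fun i _ => hfac0 i)
            intro i _
            rw [hval i]
            have := Real.add_one_le_exp (q * w i * (Real.exp (-lam) - 1)
              + q * ((1 - w i) / ((L : ℝ) - 1)) * (Real.exp lam - 1))
            linarith
        _ = Real.exp (∑ i, (q * w i * (Real.exp (-lam) - 1)
              + q * ((1 - w i) / ((L : ℝ) - 1)) * (Real.exp lam - 1))) := (Real.exp_sum _ _).symm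
        _ = Real.exp (P * (Real.exp (-lam) - 1) + R * (Real.exp lam - 1)) := by
            congr 1
            rw [Finset.sum_add_distrib]
            have e1 : ∑ i, q * w i * (Real.exp (-lam) - 1) = P * (Real.exp (-lam) - 1) := by
              rw [hPdef, hWdef, Finset.mul_sum, Finset.sum_mul]
            have e2 : ∑ i, q * ((1 - w i) / ((L : ℝ) - 1)) * (Real.exp lam - 1)
                = R * (Real.exp lam - 1) := by
              have hsub : ∑ i, (1 - w i) = (M:ℝ) - W := by
                rw [Finset.sum_sub_distrib, hWdef]
                simp
              rw [hRdef, ← hsub, Finset.mul_sum, Finset.sum_div, Finset.sum_mul]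
              exact Finset.sum_congr rfl fun i _ => by ring
            rw [e1, e2]
    calc ∑ h ∈ S, ∏ i, CrowdHom.condLaw q w i k (h i)
        ≤ Real.exp (P * (Real.exp (-lam) - 1) + R * (Real.exp lam - 1)) :=
          step3.trans (step4 ▸ step5)
      _ ≤ K := Real.exp_le_exp.2 hkey
  -- prior sums to 1
  have hprisum : ∑ k, pri k = 1 := by
    set j0 : Fin N := ⟨0, hN⟩
    have hmeas : ∀ k : Fin L, MeasurableSet {ω | y j0 ω = k} := by
      intro k
      exact (hym j0) (measurableSet_singleton k)
    have hdisj : (↑(Finset.univ : Finset (Fin L)) : Set (Fin L)).PairwiseDisjoint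
        (fun k => {ω | y j0 ω = k}) := by
      intro k1 _ k2 _ hne
      rw [Function.onFun, Set.disjoint_left]
      rintro ω h1 h2
      exact hne (h1.symm.trans h2)
    have hcover : (⋃ k ∈ (Finset.univ : Finset (Fin L)), {ω | y j0 ω = k}) = Set.univ := by
      ext ω; simp
    calc ∑ k, pri k = ∑ k, (μ {ω | y j0 ω = k}).toReal := by
          exact Finset.sum_congr rfl fun k _ => (hprior j0 k).symm
      _ = (∑ k, μ {ω | y j0 ω = k}).toReal :=
          (ENNReal.toReal_sum fun k _ => measure_ne_top μ _).symm
      _ = (μ (⋃ k ∈ (Finset.univ : Finset (Fin L)), {ω | y j0 ω = k})).toReal := by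
          rw [measure_biUnion_finset hdisj fun k _ => hmeas k]
      _ = 1 := by rw [hcover]; simp
  -- per-j union bound
  have perj : ∀ j : Fin N, (μ {ω | yhat j ω ≠ y j ω}).toReal ≤ ((L:ℝ) - 1) * K := by
    intro j
    set A : Fin L → Fin L → Set Ω := fun k g =>
      {ω | y j ω = k ∧ (∑ i, if Z i j ω = k.succ then (1:ℝ) else 0)
          ≤ ∑ i, if Z i j ω = g.succ then (1:ℝ) else 0} with hAdef
    have hsub : {ω | yhat j ω ≠ y j ω} ⊆ ⋃ k, ⋃ g ∈ Finset.univ.erase k, A k g := by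
      intro ω hω
      simp only [Set.mem_setOf_eq] at hω
      refine Set.mem_iUnion.2 ⟨y j ω, Set.mem_iUnion.2 ⟨yhat j ω, Set.mem_iUnion.2
        ⟨Finset.mem_erase.2 ⟨hω, Finset.mem_univ _⟩, ⟨rfl, hyhat j ω (y j ω)⟩⟩⟩⟩
    have hmes : μ {ω | yhat j ω ≠ y j ω}
        ≤ ∑ k, ∑ g ∈ Finset.univ.erase k, μ (A k g) := by
      calc μ {ω | yhat j ω ≠ y j ω} ≤ μ (⋃ k, ⋃ g ∈ Finset.univ.erase k, A k g) :=
            measure_mono hsub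
        _ ≤ ∑ k, μ (⋃ g ∈ Finset.univ.erase k, A k g) := measure_iUnion_fintype_le μ _
        _ ≤ ∑ k, ∑ g ∈ Finset.univ.erase k, μ (A k g) :=
            Finset.sum_le_sum fun k _ => measure_biUnion_finset_le _ _
    have hfin : (∑ k, ∑ g ∈ Finset.univ.erase k, μ (A k g)) ≠ ⊤ := by
      refine (ENNReal.sum_lt_top.2 fun k _ => ?_).ne
      exact (ENNReal.sum_lt_top.2 fun g _ => measure_lt_top μ _)
    calc (μ {ω | yhat j ω ≠ y j ω}).toReal
        ≤ (∑ k, ∑ g ∈ Finset.univ.erase k, μ (A k g)).toReal :=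
          ENNReal.toReal_mono hfin hmes
      _ = ∑ k, ∑ g ∈ Finset.univ.erase k, (μ (A k g)).toReal := by
          rw [ENNReal.toReal_sum fun k _ => (ENNReal.sum_lt_top.2
            fun g _ => measure_lt_top μ _).ne]
          exact Finset.sum_congr rfl fun k _ =>
            ENNReal.toReal_sum fun g _ => measure_ne_top μ _
      _ ≤ ∑ k, ∑ _g ∈ Finset.univ.erase k, pri k * K := by
          apply Finset.sum_le_sum
          intro k _
          apply Finset.sum_le_sum
          intro g hg
          exact main j k g (Finset.mem_erase.1 hg).1
      _ = ∑ k, ((L:ℝ) - 1) * (pri k * K) := by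
          apply Finset.sum_congr rfl
          intro k _
          rw [Finset.sum_const, Finset.card_erase_of_mem (Finset.mem_univ k),
            Finset.card_univ, Fintype.card_fin, nsmul_eq_mul]
          congr 1
          have : (1:ℕ) ≤ L := by omega
          push_cast [Nat.cast_sub this]
          ring
      _ = ((L:ℝ) - 1) * K := by
          rw [← Finset.mul_sum]
          have : ∑ k, pri k * K = (∑ k, pri k) * K := by rw [Finset.sum_mul]
          rw [this, hprisum, one_mul]
  have htot : (N : ℝ)⁻¹ * ∑ j, (μ {ω | yhat j ω ≠ y j ω}).toReal ≤ ((L:ℝ) - 1) * K := by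
    calc (N : ℝ)⁻¹ * ∑ j, (μ {ω | yhat j ω ≠ y j ω}).toReal
        ≤ (N : ℝ)⁻¹ * ∑ _j : Fin N, ((L:ℝ) - 1) * K := by
          apply mul_le_mul_of_nonneg_left (Finset.sum_le_sum fun j _ => perj j)
            (by positivity)
      _ = ((L:ℝ) - 1) * K := by
          rw [Finset.sum_const, Finset.card_univ, Fintype.card_fin, nsmul_eq_mul]
          field_simp
  -- exponent comparisons
  have hEval : -(P - R) ^ 2 / (2 * ((M:ℝ) * q))
      = -((1/2) * ((L:ℝ)/((L:ℝ)-1))^2 * (M:ℝ) * q * δ^2) := by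
    rw [hPRval]
    field_simp
  have hbase : 0 ≤ (1/2) * ((L:ℝ)/((L:ℝ)-1))^2 * (M:ℝ) * q * δ^2 := by positivity
  constructor
  · apply htot.trans
    apply mul_le_mul_of_nonneg_left _ (by linarith : (0:ℝ) ≤ (L:ℝ) - 1)
    rw [hKdef]
    apply Real.exp_le_exp.2
    rw [hEval]
    have : -(1 / 2) * ((L : ℝ) / ((L : ℝ) - 1)) ^ 2 * (M : ℝ) * q ^ 2 * δ ^ 2
        = -(((1/2) * ((L:ℝ)/((L:ℝ)-1))^2 * (M:ℝ) * q * δ^2) * q) := by ring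
    rw [this, neg_le_neg_iff]
    nlinarith
  · apply htot.trans
    apply mul_le_mul_of_nonneg_left _ (by linarith : (0:ℝ) ≤ (L:ℝ) - 1)
    rw [hKdef]
    apply Real.exp_le_exp.2
    rw [hEval, neg_le_neg_iff]
    have hD1 : (1:ℝ) ≤ 1 + (L:ℝ) / (3 * ((L:ℝ) - 1)) * δ := by
      have : 0 < (L:ℝ) / (3 * ((L:ℝ) - 1)) * δ := by positivity
      linarith
    exact div_le_self hbase hD1
end
end
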